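/- arXiv:2411.07587 — 5 statements merged into one kernel-verified Lean document; each statement's English description precedes it below -/
import Mathlib

section
/- Let k ∈ ℕ and let h be a smooth real function on a neighborhood of 0 ∈ ℝ with h(0) > 0. Define ψ(x) = x·h(x)^{1/(k+1)} on the set where h > 0 and φ(x,y) = (ψ(x), y). Then ψ(0) = 0, ψ'(0) = h(0)^{1/(k+1)} ≠ 0, so φ is a local diffeomorphism of ℝ² at the origin fixing the origin which preserves the second coordinate (hence φ*(dy) = dy), and (y − x^{k+1}) ∘ φ = y − x^{k+1}·h(x) on a neighborhood of 0 ∈ ℝ². -/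
noncomputable section

/-- For `h` smooth near `0 ∈ ℝ` with `h(0) > 0`, the map
`φ(x,y) = (x·h(x)^{1/(k+1)}, y)` is a local diffeomorphism at the origin, fixing the
origin, preserving the second coordinate (hence `φ*(dy) = dy`), and
`(y − x^{k+1}) ∘ φ = y − x^{k+1}·h(x)` near the origin. -/
theorem stmt_5 (k : ℕ) (V : Set ℝ) (hVo : IsOpen V) (hV0 : (0 : ℝ) ∈ V)
    (h : ℝ → ℝ) (hh : ContDiffOn ℝ (⊤ : ℕ∞) h V) (h0 : 0 < h 0)
    (ψ : ℝ → ℝ) (hψdef : ∀ x, ψ x = x * h x ^ (1 / (k + 1 : ℝ)))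
    (φ : ℝ × ℝ → ℝ × ℝ) (hφdef : ∀ p : ℝ × ℝ, φ p = (ψ p.1, p.2)) :
    ψ 0 = 0 ∧
    deriv ψ 0 = h 0 ^ (1 / (k + 1 : ℝ)) ∧
    h 0 ^ (1 / (k + 1 : ℝ)) ≠ 0 ∧
    ∃ W : Set (ℝ × ℝ), IsOpen W ∧ (0 : ℝ × ℝ) ∈ W ∧
      ContDiffOn ℝ (⊤ : ℕ∞) φ W ∧ φ 0 = 0 ∧
      (∀ p ∈ W, (fderiv ℝ φ p).det ≠ 0) ∧
      (∀ p ∈ W, (φ p).2 = p.2) ∧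
      (∀ p ∈ W, (ContinuousLinearMap.snd ℝ ℝ ℝ).comp (fderiv ℝ φ p) =
        ContinuousLinearMap.snd ℝ ℝ ℝ) ∧
      (∀ p ∈ W, (φ p).2 - (φ p).1 ^ (k + 1) = p.2 - p.1 ^ (k + 1) * h p.1) := by
  have hψfun : ψ = fun x => x * h x ^ (1 / (k + 1 : ℝ)) := funext hψdef
  have hφfun : φ = fun p : ℝ × ℝ => (ψ p.1, p.2) := funext hφdef
  have hψ0 : ψ 0 = 0 := by rw [hψdef]; ring
  -- the open set where h is positive
  have hhc : ContinuousOn h V := hh.continuousOn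
  set U₀ : Set ℝ := V ∩ h ⁻¹' Set.Ioi 0 with hU₀
  have hU₀o : IsOpen U₀ := hhc.isOpen_inter_preimage hVo isOpen_Ioi
  have hU₀0 : (0 : ℝ) ∈ U₀ := ⟨hV0, h0⟩
  have hU₀pos : ∀ x ∈ U₀, 0 < h x := fun x hx => hx.2
  -- ψ is smooth on U₀
  have hψcd : ContDiffOn ℝ (⊤ : ℕ∞) ψ U₀ := by
    rw [hψfun]
    exact contDiffOn_id.mul
      ((hh.mono Set.inter_subset_left).rpow_const_of_ne
        (fun x hx => (hU₀pos x hx).ne'))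
  -- derivative of ψ at 0
  have hderiv0 : HasDerivAt ψ (h 0 ^ (1 / (k + 1 : ℝ))) 0 := by
    have hhda : DifferentiableAt ℝ h 0 :=
      (hh.contDiffAt (hVo.mem_nhds hV0)).differentiableAt (by simp)
    have h1 : HasDerivAt (fun x => h x ^ (1 / (k + 1 : ℝ)))
        (deriv h 0 * (1 / (k + 1 : ℝ)) * h 0 ^ ((1 / (k + 1 : ℝ)) - 1)) 0 :=
      hhda.hasDerivAt.rpow_const (Or.inl h0.ne')
    have := (hasDerivAt_id (0 : ℝ)).mul h1
    simp only [hψfun]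
    simpa [Pi.mul_def] using this
  have hdψ0 : deriv ψ 0 = h 0 ^ (1 / (k + 1 : ℝ)) := hderiv0.deriv
  have hne : h 0 ^ (1 / (k + 1 : ℝ)) ≠ 0 := (Real.rpow_pos_of_pos h0 _).ne'
  refine ⟨hψ0, hdψ0, hne, ?_⟩
  -- shrink to where deriv ψ ≠ 0
  have hdc : ContinuousOn (deriv ψ) U₀ :=
    hψcd.continuousOn_deriv_of_isOpen hU₀o (mod_cast le_top)
  set U : Set ℝ := U₀ ∩ deriv ψ ⁻¹' {(0 : ℝ)}ᶜ with hU
  have hUo : IsOpen U := hdc.isOpen_inter_preimage hU₀o isOpen_compl_singleton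
  have hU0 : (0 : ℝ) ∈ U := ⟨hU₀0, by
    simp only [Set.mem_preimage, Set.mem_compl_iff, Set.mem_singleton_iff, hdψ0]
    exact hne⟩
  refine ⟨U ×ˢ (Set.univ : Set ℝ), hUo.prod isOpen_univ,
    ⟨hU0, Set.mem_univ _⟩, ?_, ?_, ?_, ?_, ?_, ?_⟩
  · -- smoothness of φ
    rw [hφfun]
    exact (hψcd.comp contDiff_fst.contDiffOn
      (fun p hp => hp.1.1)).prodMk contDiff_snd.contDiffOn
  · rw [hφdef]; simp [hψ0]
  all_goals {
    intro p hp
    have hp1 : p.1 ∈ U := hp.1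
    have hpos : 0 < h p.1 := hp1.1.2
    have hdiff : DifferentiableAt ℝ ψ p.1 :=
      (hψcd.contDiffAt (hU₀o.mem_nhds hp1.1)).differentiableAt (by simp)
    have hdne : deriv ψ p.1 ≠ 0 := hp1.2
    -- fderiv computation
    set e : (ℝ × ℝ) ≃L[ℝ] (ℝ × ℝ) :=
      (ContinuousLinearEquiv.unitsEquivAut ℝ (Units.mk0 _ hdne)).prodCongr
        (ContinuousLinearEquiv.refl ℝ ℝ) with he
    have hF : HasFDerivAt φ (e : (ℝ × ℝ) →L[ℝ] (ℝ × ℝ)) p := by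
      rw [hφfun]
      have h1 : HasFDerivAt (fun q : ℝ × ℝ => ψ q.1)
          ((deriv ψ p.1) • (ContinuousLinearMap.fst ℝ ℝ ℝ)) p :=
        hdiff.hasDerivAt.comp_hasFDerivAt p (hasFDerivAt_fst)
      have h2 := h1.prodMk hasFDerivAt_snd
      refine h2.congr_fderiv ?_
      refine ContinuousLinearMap.ext fun q => ?_
      simp [he, ContinuousLinearEquiv.prodCongr_apply, Prod.map,
        ContinuousLinearEquiv.unitsEquivAut_apply, mul_comm]
    have hfd : fderiv ℝ φ p = (e : (ℝ × ℝ) →L[ℝ] (ℝ × ℝ)) := hF.fderiv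
    first
    | -- det ≠ 0
      (rw [hfd]
       have : IsUnit (LinearMap.det ((e : (ℝ × ℝ) →L[ℝ] (ℝ × ℝ)) :
           (ℝ × ℝ) →ₗ[ℝ] (ℝ × ℝ))) := e.toLinearEquiv.isUnit_det'
       exact this.ne_zero
       done)
    | -- φ p snd
      (rw [hφdef]; done)
    | -- snd comp
      (rw [hfd]
       refine ContinuousLinearMap.ext fun q => ?_
       simp [he, ContinuousLinearEquiv.prodCongr_apply]
       done)
    | -- final identity
      (rw [hφdef, hψdef]
       have : (h p.1 ^ (1 / (k + 1 : ℝ))) ^ (k + 1) = h p.1 := by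
         rw [← Real.rpow_natCast (h p.1 ^ (1 / (k + 1 : ℝ))) (k + 1),
           ← Real.rpow_mul hpos.le]
         norm_num
         rw [inv_mul_cancel₀ (by positivity : ((k : ℝ) + 1) ≠ 0),
           Real.rpow_one]
       simp only [mul_pow, this]
       done)
  }
end
end

section
/- Let k ≥ 0 be an integer and let f be a smooth function on a neighborhood of 0 ∈ ℝ² with f(0,0) = 0, ∂f/∂y(0,0) ≠ 0, and such that the one-variable function x ↦ f(x,0) has all derivatives of order ≤ k equal to 0 at x = 0 and nonzero derivative of order k+1 at x = 0 (so the zero curve of f is regular at the origin and has contact of order k with the x-axis). Then there exist a local diffeomorphism φ at 0 with φ(0) = 0 and smooth nonvanishing functions κ, λ near 0 such that dy = κ·φ*(dy) and f = λ·((y − x^{k+1}) ∘ φ) on a neighborhood of the origin. Consequently, the vector field f·X is orbitally dy-conjugate to the vector field (y − x^{k+1})·X, where X = −∂/∂x, i.e. X(x,y) = (−1, 0), is the vector field in the kernel of dy. -/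
set_option synthInstance.maxHeartbeats 1000000
set_option maxHeartbeats 1000000
noncomputable section

open Set Metric MeasureTheory intervalIntegral Filter

section ParInt

variable {P : Type} [NormedAddCommGroup P] [NormedSpace ℝ P] [ProperSpace P]

lemma slice_contOn {E : Type} [NormedAddCommGroup E] [NormedSpace ℝ E]
    {F : ℝ × P → E} {O : Set (ℝ × P)} (hFc : ContinuousOn F O)
    {x : P} (hx : ∀ t ∈ Icc (0:ℝ) 1, ((t, x) : ℝ × P) ∈ O) :
    ContinuousOn (fun t => F (t, x)) (Icc (0:ℝ) 1) :=
  hFc.comp ((continuous_id.prodMk continuous_const).continuousOn) hx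

lemma parint_contDiffOn (n : ℕ) {E : Type} [NormedAddCommGroup E] [NormedSpace ℝ E]
    [CompleteSpace E]
    (F : ℝ × P → E) (O : Set (ℝ × P)) (hO : IsOpen O)
    (hF : ContDiffOn ℝ (⊤ : ℕ∞) F O) (V : Set P) (hV : IsOpen V)
    (hVO : ∀ p ∈ V, ∀ t ∈ Icc (0:ℝ) 1, ((t, p) : ℝ × P) ∈ O) :
    ContDiffOn ℝ (n : ℕ∞) (fun p => ∫ t : ℝ in (0:ℝ)..1, F (t, p)) V := by
  induction n generalizing E with
  | zero =>
    rw [show ((0:ℕ) : ℕ∞) = 0 by rfl]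
    rw [show ((0 : ℕ∞) : WithTop ℕ∞) = 0 by rfl, contDiffOn_zero]
    intro p₀ hp₀
    obtain ⟨ρ, ρpos, hρ⟩ : ∃ ρ > 0, closedBall p₀ ρ ⊆ V :=
      (Metric.nhds_basis_closedBall.mem_iff).1 (hV.mem_nhds hp₀)
    have hK : IsCompact (Icc (0:ℝ) 1 ×ˢ closedBall p₀ ρ) :=
      isCompact_Icc.prod (isCompact_closedBall _ _)
    have hKO : (Icc (0:ℝ) 1 ×ˢ closedBall p₀ ρ) ⊆ O := by
      rintro ⟨t, x⟩ ⟨ht, hx⟩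
      exact hVO x (hρ hx) t ht
    obtain ⟨M, hM⟩ := hK.exists_bound_of_continuousOn (hF.continuousOn.mono hKO)
    have hIoc : uIoc (0:ℝ) 1 = Ioc (0:ℝ) 1 := uIoc_of_le zero_le_one
    apply continuousWithinAt_of_dominated_interval (bound := fun _ => M)
    · filter_upwards [self_mem_nhdsWithin] with x hx
      rw [hIoc]
      exact ((slice_contOn hF.continuousOn (hVO x hx)).mono Ioc_subset_Icc_self
        ).aestronglyMeasurable measurableSet_Ioc
    · filter_upwards [mem_nhdsWithin_of_mem_nhds (ball_mem_nhds p₀ ρpos)] with x hx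
      refine Eventually.of_forall fun t ht => ?_
      rw [hIoc] at ht
      exact hM (t, x) ⟨Ioc_subset_Icc_self ht, ball_subset_closedBall hx⟩
    · exact intervalIntegrable_const
    · refine Eventually.of_forall fun t ht => ?_
      rw [hIoc] at ht
      have : ContinuousAt F (t, p₀) :=
        hF.continuousOn.continuousAt (hO.mem_nhds (hVO p₀ hp₀ t (Ioc_subset_Icc_self ht)))
      exact (this.comp ((continuous_const.prodMk continuous_id).continuousAt)).continuousWithinAt
  | succ n IH =>
    set F' : ℝ × P → (P →L[ℝ] E) :=
      fun z => (fderiv ℝ F z).comp (ContinuousLinearMap.inr ℝ ℝ P) with hF'def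
    have hF' : ContDiffOn ℝ (⊤ : ℕ∞) F' O :=
      (hF.fderiv_of_isOpen hO (by exact_mod_cast le_top)).clm_comp contDiffOn_const
    have hderiv : ∀ t x, ((t, x) : ℝ × P) ∈ O →
        HasFDerivAt (fun y => F (t, y)) (F' (t, x)) x := by
      intro t x hz
      have h1 : HasFDerivAt F (fderiv ℝ F (t, x)) (t, x) :=
        ((hF.contDiffAt (hO.mem_nhds hz)).differentiableAt
          (by simp)).hasFDerivAt
      exact h1.comp x (hasFDerivAt_prodMk_right t x)
    have hkey : ∀ p₀ ∈ V,
        HasFDerivAt (fun p => ∫ t : ℝ in (0:ℝ)..1, F (t, p))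
          (∫ t : ℝ in (0:ℝ)..1, F' (t, p₀)) p₀ := by
      intro p₀ hp₀
      obtain ⟨ρ, ρpos, hρ⟩ : ∃ ρ > 0, closedBall p₀ ρ ⊆ V :=
        (Metric.nhds_basis_closedBall.mem_iff).1 (hV.mem_nhds hp₀)
      have hK : IsCompact (Icc (0:ℝ) 1 ×ˢ closedBall p₀ ρ) :=
        isCompact_Icc.prod (isCompact_closedBall _ _)
      have hKO : (Icc (0:ℝ) 1 ×ˢ closedBall p₀ ρ) ⊆ O := by
        rintro ⟨t, x⟩ ⟨ht, hx⟩
        exact hVO x (hρ hx) t ht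
      obtain ⟨M, hM⟩ := hK.exists_bound_of_continuousOn (hF'.continuousOn.mono hKO)
      have hIoc : uIoc (0:ℝ) 1 = Ioc (0:ℝ) 1 := uIoc_of_le zero_le_one
      have hIcc : uIcc (0:ℝ) 1 = Icc (0:ℝ) 1 := uIcc_of_le zero_le_one
      apply intervalIntegral.hasFDerivAt_integral_of_dominated_of_fderiv_le (s := ball p₀ ρ)
        (F := fun x t => F (t, x)) (F' := fun x t => F' (t, x)) (bound := fun _ => M) (ball_mem_nhds p₀ ρpos)
      · filter_upwards [hV.mem_nhds hp₀] with x hx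
        rw [hIoc]
        exact ((slice_contOn hF.continuousOn (hVO x hx)).mono Ioc_subset_Icc_self
          ).aestronglyMeasurable measurableSet_Ioc
      · apply ContinuousOn.intervalIntegrable
        rw [hIcc]
        exact slice_contOn hF.continuousOn (hVO p₀ hp₀)
      · rw [hIoc]
        exact ((slice_contOn hF'.continuousOn (hVO p₀ hp₀)).mono Ioc_subset_Icc_self
          ).aestronglyMeasurable measurableSet_Ioc
      · refine Eventually.of_forall fun t ht x hx => ?_
        rw [hIoc] at ht
        exact hM (t, x) ⟨Ioc_subset_Icc_self ht, ball_subset_closedBall hx⟩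
      · exact intervalIntegrable_const
      · refine Eventually.of_forall fun t ht x hx => ?_
        rw [hIoc] at ht
        exact hderiv t x (hVO x (hρ (ball_subset_closedBall hx)) t (Ioc_subset_Icc_self ht))
    have hcast : ((((n+1):ℕ) : ℕ∞) : WithTop ℕ∞) = ((n : ℕ∞) : WithTop ℕ∞) + 1 := by
      push_cast; rfl
    rw [hcast, contDiffOn_succ_iff_fderiv_of_isOpen hV]
    refine ⟨fun p hp => (hkey p hp).differentiableAt.differentiableWithinAt, ?_, ?_⟩
    · intro h; exact absurd h (by simp)
    · exact (IH F' hF').congr fun p hp => (hkey p hp).fderiv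

end ParInt

section Hadamard

lemma mem_box_aux {δ : ℝ} {p : ℝ × ℝ} (hp : p ∈ Ioo (-δ) δ ×ˢ Ioo (-δ) δ)
    {t : ℝ} (ht : t ∈ Icc (0:ℝ) 1) : ((p.1, t * p.2) : ℝ × ℝ) ∈ Ioo (-δ) δ ×ˢ Ioo (-δ) δ := by
  refine ⟨hp.1, ?_⟩
  have h2 := hp.2
  simp only [mem_Ioo, ← abs_lt] at h2 ⊢
  calc |t * p.2| = |t| * |p.2| := abs_mul _ _
    _ ≤ 1 * |p.2| := by
        have := abs_le.2 ⟨le_trans (by norm_num) ht.1, ht.2⟩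
        exact mul_le_mul_of_nonneg_right this (abs_nonneg _)
    _ < δ := by simpa using h2

lemma hadamard2 {f : ℝ × ℝ → ℝ} {U : Set (ℝ × ℝ)} (hUo : IsOpen U)
    (hf : ContDiffOn ℝ (⊤ : ℕ∞) f U) {δ : ℝ}
    (hbox : Ioo (-δ) δ ×ˢ Ioo (-δ) δ ⊆ U) :
    ∃ q : ℝ × ℝ → ℝ, ContDiffOn ℝ (⊤ : ℕ∞) q (Ioo (-δ) δ ×ˢ Ioo (-δ) δ) ∧
      (∀ p ∈ Ioo (-δ) δ ×ˢ Ioo (-δ) δ, f p = f (p.1, 0) + p.2 * q p) ∧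
      q 0 = fderiv ℝ f 0 (0, 1) := by
  set B : Set (ℝ × ℝ) := Ioo (-δ) δ ×ˢ Ioo (-δ) δ with hB
  have hBo : IsOpen B := (isOpen_Ioo).prod isOpen_Ioo
  set m : ℝ × (ℝ × ℝ) → ℝ × ℝ := fun z => (z.2.1, z.1 * z.2.2) with hm
  have hmc : ContDiff ℝ (⊤ : ℕ∞) m :=
    ContDiff.prodMk (contDiff_snd.fst) (contDiff_fst.mul contDiff_snd.snd)
  set O : Set (ℝ × (ℝ × ℝ)) := m ⁻¹' U with hO
  have hOo : IsOpen O := hUo.preimage hmc.continuous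
  set G : ℝ × (ℝ × ℝ) → ℝ := fun z => fderiv ℝ f (m z) (0, 1) with hG
  have hfd : ContDiffOn ℝ (⊤ : ℕ∞) (fderiv ℝ f) U :=
    hf.fderiv_of_isOpen hUo (by exact_mod_cast le_top)
  have hGsm : ContDiffOn ℝ (⊤ : ℕ∞) G O :=
    (hfd.clm_apply contDiffOn_const).comp hmc.contDiffOn (fun z hz => hz)
  have hVO : ∀ p ∈ B, ∀ t ∈ Icc (0:ℝ) 1, ((t, p) : ℝ × (ℝ × ℝ)) ∈ O :=
    fun p hp t ht => hbox (mem_box_aux hp ht)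
  refine ⟨fun p => ∫ t : ℝ in (0:ℝ)..1, G (t, p), ?_, ?_, ?_⟩
  · rw [contDiffOn_infty]
    exact fun n => parint_contDiffOn n G O hOo hGsm B hBo hVO
  · intro p hp
    have hmem : ∀ t ∈ Icc (0:ℝ) 1, ((p.1, t * p.2) : ℝ × ℝ) ∈ U :=
      fun t ht => hbox (mem_box_aux hp ht)
    have hds : ∀ t ∈ uIcc (0:ℝ) 1,
        HasDerivAt (fun s => f (p.1, s * p.2)) (p.2 * G (t, p)) t := by
      intro t ht
      rw [uIcc_of_le zero_le_one] at ht
      have hdf : HasFDerivAt f (fderiv ℝ f (p.1, t * p.2)) (p.1, t * p.2) :=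
        ((hf.contDiffAt (hUo.mem_nhds (hmem t ht))).differentiableAt
          (by simp)).hasFDerivAt
      have hγ : HasDerivAt (fun s : ℝ => ((p.1, s * p.2) : ℝ × ℝ)) ((0, p.2) : ℝ × ℝ) t := by
        have h1 : HasDerivAt (fun s : ℝ => s * p.2) p.2 t := by
          simpa using (hasDerivAt_id t).mul_const p.2
        exact (hasDerivAt_const t p.1).prodMk h1
      have := hdf.comp_hasDerivAt t hγ
      have heq : fderiv ℝ f (p.1, t * p.2) (0, p.2) = p.2 * G (t, p) := by
        have : ((0, p.2) : ℝ × ℝ) = p.2 • ((0, 1) : ℝ × ℝ) := by simp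
        rw [this, ContinuousLinearMap.map_smul]
        simp [hG, hm, smul_eq_mul]
      rwa [heq] at this
    have hint : IntervalIntegrable (fun t => p.2 * G (t, p)) volume 0 1 := by
      apply ContinuousOn.intervalIntegrable
      rw [uIcc_of_le zero_le_one]
      exact continuousOn_const.mul (slice_contOn hGsm.continuousOn (hVO p hp))
    have hFTC := intervalIntegral.integral_eq_sub_of_hasDerivAt hds hint
    rw [intervalIntegral.integral_const_mul] at hFTC
    simp only [one_mul, zero_mul] at hFTC
    have : f (p.1, p.2) = f p := by rw [Prod.mk.eta]
    rw [this] at hFTC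
    linarith [hFTC]
  · have : ∀ t : ℝ, G (t, (0 : ℝ × ℝ)) = fderiv ℝ f 0 (0, 1) := by
      intro t; simp [hG, hm, Prod.ext_iff]; rfl
    simp only [this]
    simp

lemma hadamard1 {g : ℝ → ℝ} {δ : ℝ}
    (hg : ContDiffOn ℝ (⊤ : ℕ∞) g (Ioo (-δ) δ)) :
    ∃ b : ℝ → ℝ, ContDiffOn ℝ (⊤ : ℕ∞) b (Ioo (-δ) δ) ∧
      ∀ x ∈ Ioo (-δ) δ, g x = g 0 + x * b x := by
  set I : Set ℝ := Ioo (-δ) δ with hI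
  have hIo : IsOpen I := isOpen_Ioo
  set m : ℝ × ℝ → ℝ := fun z => z.1 * z.2 with hm
  have hmc : ContDiff ℝ (⊤ : ℕ∞) m := contDiff_fst.mul contDiff_snd
  set O : Set (ℝ × ℝ) := m ⁻¹' I with hO
  have hOo : IsOpen O := hIo.preimage hmc.continuous
  set G : ℝ × ℝ → ℝ := fun z => deriv g (m z) with hG
  have hgd : ContDiffOn ℝ (⊤ : ℕ∞) (deriv g) I :=
    hg.deriv_of_isOpen hIo (by exact_mod_cast le_top)
  have hGsm : ContDiffOn ℝ (⊤ : ℕ∞) G O := hgd.comp hmc.contDiffOn (fun z hz => hz)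
  have hmem : ∀ x ∈ I, ∀ t ∈ Icc (0:ℝ) 1, t * x ∈ I := by
    intro x hx t ht
    simp only [hI, mem_Ioo, ← abs_lt] at hx ⊢
    calc |t * x| = |t| * |x| := abs_mul _ _
      _ ≤ 1 * |x| := mul_le_mul_of_nonneg_right
          (abs_le.2 ⟨le_trans (by norm_num) ht.1, ht.2⟩) (abs_nonneg _)
      _ < δ := by simpa using hx
  have hVO : ∀ x ∈ I, ∀ t ∈ Icc (0:ℝ) 1, ((t, x) : ℝ × ℝ) ∈ O :=
    fun x hx t ht => hmem x hx t ht
  refine ⟨fun x => ∫ t : ℝ in (0:ℝ)..1, G (t, x), ?_, ?_⟩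
  · rw [contDiffOn_infty]
    exact fun n => parint_contDiffOn n G O hOo hGsm I hIo hVO
  · intro x hx
    have hds : ∀ t ∈ uIcc (0:ℝ) 1,
        HasDerivAt (fun s => g (s * x)) (x * G (t, x)) t := by
      intro t ht
      rw [uIcc_of_le zero_le_one] at ht
      have hdg : HasDerivAt g (deriv g (t * x)) (t * x) :=
        ((hg.contDiffAt (hIo.mem_nhds (hmem x hx t ht))).differentiableAt
          (by simp)).hasDerivAt
      have hγ : HasDerivAt (fun s : ℝ => s * x) x t := by
        simpa using (hasDerivAt_id t).mul_const x
      have := hdg.comp t hγ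
      simpa [hG, hm, mul_comm, Function.comp_def] using this
    have hint : IntervalIntegrable (fun t => x * G (t, x)) volume 0 1 := by
      apply ContinuousOn.intervalIntegrable
      rw [uIcc_of_le zero_le_one]
      exact continuousOn_const.mul (slice_contOn hGsm.continuousOn (hVO x hx))
    have hFTC := intervalIntegral.integral_eq_sub_of_hasDerivAt hds hint
    rw [intervalIntegral.integral_const_mul] at hFTC
    simp only [one_mul, zero_mul] at hFTC
    linarith [hFTC]

end Hadamard

section Taylor1D

lemma iD_smooth {s : Set ℝ} (hs : IsOpen s) (n : ℕ) :
    ∀ {g : ℝ → ℝ}, ContDiffOn ℝ (⊤ : ℕ∞) g s →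
      ContDiffOn ℝ (⊤ : ℕ∞) (iteratedDeriv n g) s := by
  induction n with
  | zero => intro g hg; simpa [iteratedDeriv_zero] using hg
  | succ n IH =>
    intro g hg
    rw [iteratedDeriv_succ']
    exact IH (hg.deriv_of_isOpen hs (by exact_mod_cast le_top))

lemma iD_diffAt {s : Set ℝ} (hs : IsOpen s) {g : ℝ → ℝ}
    (hg : ContDiffOn ℝ (⊤ : ℕ∞) g s) (m : ℕ) {x : ℝ} (hx : x ∈ s) :
    DifferentiableAt ℝ (iteratedDeriv m g) x :=
  ((iD_smooth hs m hg).contDiffAt (hs.mem_nhds hx)).differentiableAt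
    (by simp)

lemma leibniz_mul_id {s : Set ℝ} (hs : IsOpen s) {g : ℝ → ℝ}
    (hg : ContDiffOn ℝ (⊤ : ℕ∞) g s) :
    ∀ n : ℕ, ∀ x ∈ s, iteratedDeriv (n + 1) (fun t => t * g t) x
      = x * iteratedDeriv (n + 1) g x + ((n : ℝ) + 1) * iteratedDeriv n g x := by
  intro n
  induction n with
  | zero =>
    intro x hx
    have h1 : HasDerivAt (fun t => t * g t) (1 * g x + x * deriv g x) x :=
      (hasDerivAt_id x).mul ((hg.contDiffAt (hs.mem_nhds hx)).differentiableAt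
        (by simp)).hasDerivAt
    rw [iteratedDeriv_one, h1.deriv, iteratedDeriv_one, iteratedDeriv_zero]
    push_cast; ring
  | succ n IH =>
    intro x hx
    rw [iteratedDeriv_succ]
    have hev : iteratedDeriv (n + 1) (fun t => t * g t) =ᶠ[nhds x]
        (fun y => y * iteratedDeriv (n + 1) g y + ((n : ℝ) + 1) * iteratedDeriv n g y) :=
      Filter.eventually_of_mem (hs.mem_nhds hx) IH
    rw [hev.deriv_eq]
    have d1 : HasDerivAt (fun y => y * iteratedDeriv (n + 1) g y)
        (1 * iteratedDeriv (n + 1) g x + x * deriv (iteratedDeriv (n + 1) g) x) x :=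
      (hasDerivAt_id x).mul (iD_diffAt hs hg (n + 1) hx).hasDerivAt
    have d2 : HasDerivAt (fun y => ((n : ℝ) + 1) * iteratedDeriv n g y)
        (((n : ℝ) + 1) * deriv (iteratedDeriv n g) x) x :=
      ((iD_diffAt hs hg n hx).hasDerivAt).const_mul _
    rw [(d1.fun_add d2).deriv, ← iteratedDeriv_succ, ← iteratedDeriv_succ]
    push_cast; ring

lemma iD_factor {s : Set ℝ} (hs : IsOpen s) (h0 : (0 : ℝ) ∈ s) {g g₁ : ℝ → ℝ}
    (hg₁ : ContDiffOn ℝ (⊤ : ℕ∞) g₁ s) (heq : ∀ x ∈ s, g x = x * g₁ x) (n : ℕ) :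
    iteratedDeriv (n + 1) g 0 = ((n : ℝ) + 1) * iteratedDeriv n g₁ 0 := by
  have hev : g =ᶠ[nhds 0] fun t => t * g₁ t :=
    Filter.eventually_of_mem (hs.mem_nhds h0) heq
  rw [hev.iteratedDeriv_eq (n + 1), leibniz_mul_id hs hg₁ n 0 h0]
  simp

lemma taylor_factor {δ : ℝ} (hδ : (0:ℝ) < δ) :
    ∀ (k : ℕ) (g : ℝ → ℝ), ContDiffOn ℝ (⊤ : ℕ∞) g (Ioo (-δ) δ) →
      (∀ n ≤ k, iteratedDeriv n g 0 = 0) →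
      ∃ b : ℝ → ℝ, ContDiffOn ℝ (⊤ : ℕ∞) b (Ioo (-δ) δ) ∧
        (∀ x ∈ Ioo (-δ) δ, g x = x ^ (k + 1) * b x) ∧
        iteratedDeriv (k + 1) g 0 = (Nat.factorial (k + 1) : ℝ) * b 0 := by
  have h0 : (0 : ℝ) ∈ Ioo (-δ) δ := by constructor <;> simp [hδ] <;> linarith
  intro k
  induction k with
  | zero =>
    intro g hg hflat
    obtain ⟨b, hb, hfac⟩ := hadamard1 hg
    have hg0 : g 0 = 0 := by
      have := hflat 0 le_rfl; rwa [iteratedDeriv_zero] at this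
    have hfac' : ∀ x ∈ Ioo (-δ) δ, g x = x ^ 1 * b x := by
      intro x hx; rw [hfac x hx, hg0]; ring
    refine ⟨b, hb, hfac', ?_⟩
    rw [iD_factor isOpen_Ioo h0 hb (fun x hx => by rw [hfac x hx, hg0]; ring) 0]
    simp [Nat.factorial]
  | succ k IH =>
    intro g hg hflat
    have hg0 : g 0 = 0 := by
      have := hflat 0 (Nat.zero_le _); rwa [iteratedDeriv_zero] at this
    obtain ⟨g₁, hg₁, hfac⟩ := hadamard1 hg
    have hfac' : ∀ x ∈ Ioo (-δ) δ, g x = x * g₁ x := by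
      intro x hx; rw [hfac x hx, hg0]; ring
    have hrel : ∀ n : ℕ, iteratedDeriv (n + 1) g 0 = ((n : ℝ) + 1) * iteratedDeriv n g₁ 0 :=
      fun n => iD_factor isOpen_Ioo h0 hg₁ hfac' n
    have hflat1 : ∀ n ≤ k, iteratedDeriv n g₁ 0 = 0 := by
      intro n hn
      have h1 := hflat (n + 1) (by omega)
      rw [hrel n] at h1
      have hne : ((n : ℝ) + 1) ≠ 0 := by positivity
      rcases mul_eq_zero.1 h1 with h | h
      · exact absurd h hne
      · exact h
    obtain ⟨b, hb, hfacb, hval⟩ := IH g₁ hg₁ hflat1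
    refine ⟨b, hb, ?_, ?_⟩
    · intro x hx; rw [hfac' x hx, hfacb x hx]; ring
    · rw [hrel (k + 1), hval,
        show (k + 1 + 1).factorial = (k + 1 + 1) * (k + 1).factorial from Nat.factorial_succ _]
      push_cast; ring

end Taylor1D

lemma clm_decomp (L : ℝ × ℝ →L[ℝ] ℝ) (v : ℝ × ℝ) :
    L v = v.1 * L (1, 0) + v.2 * L (0, 1) := by
  have hv : v = v.1 • ((1, 0) : ℝ × ℝ) + v.2 • ((0, 1) : ℝ × ℝ) := by
    ext <;> simp
  conv_lhs => rw [hv]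
  rw [map_add, L.map_smul, L.map_smul, smul_eq_mul, smul_eq_mul]

/-- If `f` is smooth near `0 ∈ ℝ²` with `f(0,0) = 0`, `∂f/∂y(0,0) ≠ 0`, and
`x ↦ f(x,0)` vanishes to order exactly `k+1` at `0` (zero curve regular at the
origin with contact of order `k` with the x-axis), then `f` is `K_{dy}`-equivalent
to `y − x^{k+1}`: there are a local diffeomorphism `φ` fixing `0` and smooth
nonvanishing `κ, λ` with `dy = κ·φ*(dy)` and `f = λ·((y − x^{k+1}) ∘ φ)` near `0`.
Consequently `f·X` is orbitally `dy`-conjugate to `(y − x^{k+1})·X`, where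
`X = −∂/∂x`, i.e. `X(x,y) = (−1,0)`. -/
theorem stmt_7 (k : ℕ) (U : Set (ℝ × ℝ)) (hUo : IsOpen U) (hU0 : (0 : ℝ × ℝ) ∈ U)
    (f : ℝ × ℝ → ℝ) (hf : ContDiffOn ℝ (⊤ : ℕ∞) f U)
    (hf0 : f 0 = 0) (hfy : fderiv ℝ f 0 (0, 1) ≠ 0)
    (hflat : ∀ n ≤ k, iteratedDeriv n (fun x : ℝ => f (x, 0)) 0 = 0)
    (hnonflat : iteratedDeriv (k + 1) (fun x : ℝ => f (x, 0)) 0 ≠ 0) :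
    ∃ (φ : ℝ × ℝ → ℝ × ℝ) (W : Set (ℝ × ℝ)) (κ lam : ℝ × ℝ → ℝ),
      IsOpen W ∧ (0 : ℝ × ℝ) ∈ W ∧ φ 0 = 0 ∧
      ContDiffOn ℝ (⊤ : ℕ∞) φ W ∧ (∀ p ∈ W, (fderiv ℝ φ p).det ≠ 0) ∧
      ContDiffOn ℝ (⊤ : ℕ∞) κ W ∧ (∀ p ∈ W, κ p ≠ 0) ∧
      ContDiffOn ℝ (⊤ : ℕ∞) lam W ∧ (∀ p ∈ W, lam p ≠ 0) ∧
      -- dy = κ·φ*(dy)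
      (∀ p ∈ W, ContinuousLinearMap.snd ℝ ℝ ℝ =
        κ p • ((ContinuousLinearMap.snd ℝ ℝ ℝ).comp (fderiv ℝ φ p))) ∧
      -- f = λ·((y − x^{k+1}) ∘ φ)
      (∀ p ∈ W, f p = lam p * ((φ p).2 - (φ p).1 ^ (k + 1))) ∧
      -- consequently f·X is orbitally dy-conjugate to (y − x^{k+1})·X, X = (−1,0)
      (∃ μ : ℝ × ℝ → ℝ, ContDiffOn ℝ (⊤ : ℕ∞) μ W ∧ (∀ p ∈ W, μ p ≠ 0) ∧
        ∀ p ∈ W, f p • ((-1, 0) : ℝ × ℝ) =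
          μ p • (fderiv ℝ φ p).inverse
            (((φ p).2 - (φ p).1 ^ (k + 1)) • ((-1, 0) : ℝ × ℝ))) := by
  classical
  -- a box around the origin inside U
  obtain ⟨ε, hε, hball⟩ := Metric.isOpen_iff.1 hUo 0 hU0
  set δ : ℝ := ε / 2 with hδdef
  have hδ : 0 < δ := by positivity
  have hbox : Ioo (-δ) δ ×ˢ Ioo (-δ) δ ⊆ U := by
    intro p hp
    apply hball
    rw [Metric.mem_ball, dist_zero_right, Prod.norm_def]
    have h1 : |p.1| < δ := abs_lt.2 ⟨hp.1.1, hp.1.2⟩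
    have h2 : |p.2| < δ := abs_lt.2 ⟨hp.2.1, hp.2.2⟩
    rw [Real.norm_eq_abs, Real.norm_eq_abs]
    have : δ < ε := by rw [hδdef]; linarith
    exact lt_trans (max_lt h1 h2) this
  obtain ⟨q, hqsm, hqid, hq0⟩ := hadamard2 hUo hf hbox
  have hq0ne : q 0 ≠ 0 := by rw [hq0]; exact hfy
  have h0I : (0 : ℝ) ∈ Ioo (-δ) δ := ⟨by linarith, hδ⟩
  have hgsm : ContDiffOn ℝ (⊤ : ℕ∞) (fun x : ℝ => f (x, 0)) (Ioo (-δ) δ) :=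
    hf.comp ((contDiff_id.prodMk contDiff_const).contDiffOn)
      (fun x hx => hbox ⟨hx, h0I⟩)
  obtain ⟨b, hbsm, hgfac, hgval⟩ := taylor_factor hδ k _ hgsm hflat
  have hb0ne : b 0 ≠ 0 := by
    intro h; exact hnonflat (by rw [hgval, h, mul_zero])
  set e : ℝ := if b 0 / q 0 < 0 then 1 else -1 with hedef
  have hcase : (e = 1 ∧ b 0 / q 0 < 0) ∨ (e = -1 ∧ 0 < b 0 / q 0) := by
    by_cases h : b 0 / q 0 < 0
    · exact Or.inl ⟨if_pos h, h⟩
    · exact Or.inr ⟨if_neg h,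
        lt_of_le_of_ne (not_lt.1 h) (Ne.symm (div_ne_zero hb0ne hq0ne))⟩
  have he2 : e * e = 1 := by rcases hcase with ⟨h, _⟩ | ⟨h, _⟩ <;> rw [h] <;> norm_num
  have hene : e ≠ 0 := by rcases hcase with ⟨h, _⟩ | ⟨h, _⟩ <;> rw [h] <;> norm_num
  set B : Set (ℝ × ℝ) := Ioo (-δ) δ ×ˢ Ioo (-δ) δ with hBdef
  have hBo : IsOpen B := isOpen_Ioo.prod isOpen_Ioo
  set m : ℝ × ℝ → ℝ := fun p => (-e * b p.1) / q p with hmdef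
  set r : ℝ × ℝ → ℝ := fun p => m p ^ (((k + 1 : ℕ) : ℝ))⁻¹ with hrdef
  set S1 : Set (ℝ × ℝ) := B ∩ q ⁻¹' {0}ᶜ with hS1def
  have hS1o : IsOpen S1 :=
    hqsm.continuousOn.isOpen_inter_preimage hBo isOpen_compl_singleton
  have hS1q : ∀ p ∈ S1, q p ≠ 0 := fun p hp => hp.2
  have hmsm : ContDiffOn ℝ (⊤ : ℕ∞) m S1 := by
    have hS1fst : ∀ p ∈ S1, p.1 ∈ Ioo (-δ) δ := fun p hp => (mem_prod.1 hp.1).1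
    apply ContDiffOn.div
    · exact contDiffOn_const.mul (hbsm.comp contDiff_fst.contDiffOn hS1fst)
    · exact hqsm.mono inter_subset_left
    · exact hS1q
  set S2 : Set (ℝ × ℝ) := S1 ∩ m ⁻¹' (Ioi 0) with hS2def
  have hS2o : IsOpen S2 :=
    hmsm.continuousOn.isOpen_inter_preimage hS1o isOpen_Ioi
  have hS2m : ∀ p ∈ S2, 0 < m p := fun p hp => hp.2
  have hrsm : ContDiffOn ℝ (⊤ : ℕ∞) r S2 := by
    intro p hp
    have hmAt : ContDiffAt ℝ (⊤ : ℕ∞) m p := hmsm.contDiffAt (hS1o.mem_nhds hp.1)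
    exact ((Real.contDiffAt_rpow_const_of_ne (ne_of_gt (hS2m p hp))).comp p
      hmAt).contDiffWithinAt
  set al : ℝ × ℝ → ℝ := fun p => r p + p.1 * (fderiv ℝ r p (1, 0)) with haldef
  have halsm : ContDiffOn ℝ (⊤ : ℕ∞) al S2 := by
    apply ContDiffOn.add hrsm
    exact contDiff_fst.contDiffOn.mul
      ((hrsm.fderiv_of_isOpen hS2o (by exact_mod_cast le_top)).clm_apply contDiffOn_const)
  set W : Set (ℝ × ℝ) := S2 ∩ al ⁻¹' {0}ᶜ with hWdef
  have hWo : IsOpen W :=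
    halsm.continuousOn.isOpen_inter_preimage hS2o isOpen_compl_singleton
  -- membership of 0
  have h0B : (0 : ℝ × ℝ) ∈ B := by
    constructor <;> simp only [Prod.fst_zero, Prod.snd_zero] <;> exact h0I
  have hm0 : 0 < m 0 := by
    have : m 0 = (-e * b 0) / q 0 := by simp only [hmdef, Prod.fst_zero]
    rw [this]
    rcases hcase with ⟨h1, h2⟩ | ⟨h1, h2⟩ <;> rw [h1]
    · rw [show (-(1:ℝ) * b 0) = -(b 0) by ring, neg_div]; linarith
    · rw [show (-(-1:ℝ) * b 0) = b 0 by ring]; linarith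
  have h0S2 : (0 : ℝ × ℝ) ∈ S2 := ⟨⟨h0B, hq0ne⟩, hm0⟩
  have hr0 : 0 < r 0 := Real.rpow_pos_of_pos hm0 _
  have hal0 : al 0 = r 0 := by
    simp only [haldef, Prod.fst_zero, zero_mul, add_zero]
  have h0W : (0 : ℝ × ℝ) ∈ W := by
    refine ⟨h0S2, ?_⟩
    show al 0 ≠ 0
    rw [hal0]; exact ne_of_gt hr0
  -- accessors
  have hWS2 : W ⊆ S2 := inter_subset_left
  have hWB : ∀ p ∈ W, p ∈ B := fun p hp => hp.1.1.1
  have hWq : ∀ p ∈ W, q p ≠ 0 := fun p hp => hp.1.1.2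
  have hWm : ∀ p ∈ W, 0 < m p := fun p hp => hp.1.2
  have hWal : ∀ p ∈ W, al p ≠ 0 := fun p hp => hp.2
  -- the maps
  set φ : ℝ × ℝ → ℝ × ℝ := fun p => (p.1 * r p, e * p.2) with hφdef
  set lam : ℝ × ℝ → ℝ := fun p => e * q p with hlamdef
  have hφsm : ContDiffOn ℝ (⊤ : ℕ∞) φ W :=
    ContDiffOn.prodMk (contDiff_fst.contDiffOn.mul (hrsm.mono hWS2))
      (contDiffOn_const.mul contDiff_snd.contDiffOn)
  have hlamsm : ContDiffOn ℝ (⊤ : ℕ∞) lam W :=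
    contDiffOn_const.mul ((hqsm.mono (fun p hp => hWB p hp)).mono (by intro p hp; exact hp))
  have hlamne : ∀ p ∈ W, lam p ≠ 0 := fun p hp => mul_ne_zero hene (hWq p hp)
  -- derivative of φ
  have hφd : ∀ p ∈ W, HasFDerivAt φ
      ((p.1 • fderiv ℝ r p + r p • ContinuousLinearMap.fst ℝ ℝ ℝ).prod
        (e • ContinuousLinearMap.snd ℝ ℝ ℝ)) p := by
    intro p hp
    have hrd : HasFDerivAt r (fderiv ℝ r p) p :=
      ((hrsm.contDiffAt (hS2o.mem_nhds (hWS2 hp))).differentiableAt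
        (by simp)).hasFDerivAt
    have h1 : HasFDerivAt (fun p : ℝ × ℝ => p.1 * r p)
        (p.1 • fderiv ℝ r p + r p • ContinuousLinearMap.fst ℝ ℝ ℝ) p :=
      hasFDerivAt_fst.mul hrd
    have h2 : HasFDerivAt (fun p : ℝ × ℝ => e * p.2)
        (e • ContinuousLinearMap.snd ℝ ℝ ℝ) p := hasFDerivAt_snd.const_mul e
    exact h1.prodMk h2
  have hApp : ∀ p ∈ W, ∀ v : ℝ × ℝ,
      ((p.1 • fderiv ℝ r p + r p • ContinuousLinearMap.fst ℝ ℝ ℝ).prod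
        (e • ContinuousLinearMap.snd ℝ ℝ ℝ)) v
      = (al p * v.1 + (p.1 * fderiv ℝ r p (0, 1)) * v.2, e * v.2) := by
    intro p hp v
    have hdec := clm_decomp (fderiv ℝ r p) v
    refine Prod.ext ?_ ?_
    · simp only [ContinuousLinearMap.prod_apply, ContinuousLinearMap.add_apply,
        ContinuousLinearMap.coe_smul', Pi.smul_apply, ContinuousLinearMap.coe_fst',
        smul_eq_mul, haldef]
      rw [hdec]; ring
    · simp only [ContinuousLinearMap.prod_apply, ContinuousLinearMap.coe_smul',
        Pi.smul_apply, ContinuousLinearMap.coe_snd', smul_eq_mul]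
  -- invertibility data
  have hInv : ∀ p ∈ W, (fderiv ℝ φ p).det ≠ 0 ∧
      ∀ w : ℝ × ℝ, (fderiv ℝ φ p).inverse w
        = ((al p)⁻¹ * (w.1 - (e * (p.1 * fderiv ℝ r p (0, 1))) * w.2), e * w.2) := by
    intro p hp
    have halne : al p ≠ 0 := hWal p hp
    set A : ℝ × ℝ →L[ℝ] ℝ × ℝ :=
      (p.1 • fderiv ℝ r p + r p • ContinuousLinearMap.fst ℝ ℝ ℝ).prod
        (e • ContinuousLinearMap.snd ℝ ℝ ℝ) with hAdef
    set Bm : ℝ × ℝ →L[ℝ] ℝ × ℝ :=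
      (((al p)⁻¹) • (ContinuousLinearMap.fst ℝ ℝ ℝ -
        (e * (p.1 * fderiv ℝ r p (0, 1))) • ContinuousLinearMap.snd ℝ ℝ ℝ)).prod
        (e • ContinuousLinearMap.snd ℝ ℝ ℝ) with hBmdef
    have hBm_apply : ∀ w : ℝ × ℝ, Bm w
        = ((al p)⁻¹ * (w.1 - (e * (p.1 * fderiv ℝ r p (0, 1))) * w.2), e * w.2) := by
      intro w
      refine Prod.ext ?_ ?_ <;>
        simp [hBmdef, ContinuousLinearMap.prod_apply, smul_eq_mul, mul_sub]
    have h1 : Function.LeftInverse Bm A := by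
      intro v
      rw [hApp p hp v, hBm_apply]
      refine Prod.ext ?_ ?_
      · show (al p)⁻¹ * ((al p * v.1 + (p.1 * fderiv ℝ r p (0,1)) * v.2)
          - (e * (p.1 * fderiv ℝ r p (0,1))) * (e * v.2)) = v.1
        rcases hcase with ⟨h1e, _⟩ | ⟨h1e, _⟩ <;> rw [h1e] <;> field_simp <;> ring
      · show e * (e * v.2) = v.2
        rcases hcase with ⟨h1e, _⟩ | ⟨h1e, _⟩ <;> rw [h1e] <;> ring
    have h2 : Function.RightInverse Bm A := by
      intro w
      rw [hBm_apply, hApp p hp]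
      refine Prod.ext ?_ ?_
      · show al p * ((al p)⁻¹ * (w.1 - (e * (p.1 * fderiv ℝ r p (0,1))) * w.2))
          + (p.1 * fderiv ℝ r p (0,1)) * (e * w.2) = w.1
        rcases hcase with ⟨h1e, _⟩ | ⟨h1e, _⟩ <;> rw [h1e] <;> field_simp <;> ring
      · show e * (e * w.2) = w.2
        rcases hcase with ⟨h1e, _⟩ | ⟨h1e, _⟩ <;> rw [h1e] <;> ring
    set eqv : (ℝ × ℝ) ≃L[ℝ] (ℝ × ℝ) := ContinuousLinearEquiv.equivOfInverse A Bm h1 h2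
      with heqvdef
    have hfeq : fderiv ℝ φ p = A := (hφd p hp).fderiv
    have hcoe : (eqv : (ℝ × ℝ) →L[ℝ] (ℝ × ℝ)) = A := rfl
    constructor
    · rw [hfeq, ← hcoe]
      exact (eqv.toLinearEquiv.isUnit_det').ne_zero
    · intro w
      rw [hfeq, ← hcoe, ContinuousLinearMap.inverse_equiv]
      rw [show ((eqv.symm : (ℝ × ℝ) →L[ℝ] (ℝ × ℝ))) = Bm from rfl]
      exact hBm_apply w
  -- factorization identity
  have key10 : ∀ p ∈ W, f p = lam p * ((φ p).2 - (φ p).1 ^ (k + 1)) := by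
    intro p hp
    have hpB := hWB p hp
    have hp1 : p.1 ∈ Ioo (-δ) δ := hpB.1
    have hfp : f p = p.1 ^ (k + 1) * b p.1 + p.2 * q p := by
      rw [hqid p hpB]
      have : f (p.1, 0) = p.1 ^ (k + 1) * b p.1 := hgfac p.1 hp1
      rw [this]
    have hrpow : r p ^ (k + 1) = m p :=
      Real.rpow_inv_natCast_pow (le_of_lt (hWm p hp)) (Nat.succ_ne_zero k)
    show f p = lam p * (e * p.2 - (p.1 * r p) ^ (k + 1))
    rw [mul_pow, hrpow, hfp]
    show p.1 ^ (k+1) * b p.1 + p.2 * q p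
      = e * q p * (e * p.2 - p.1 ^ (k+1) * ((-e * b p.1) / q p))
    have hqp : q p ≠ 0 := hWq p hp
    rcases hcase with ⟨h1e, _⟩ | ⟨h1e, _⟩ <;> rw [h1e] <;> field_simp [hqp] <;> ring
  refine ⟨φ, W, fun _ => e, lam, hWo, h0W, ?_, hφsm, fun p hp => (hInv p hp).1,
    contDiffOn_const, fun p hp => hene, hlamsm, hlamne, ?_, key10, ?_⟩
  · show ((0:ℝ) * r 0, e * (0:ℝ×ℝ).2) = (0 : ℝ × ℝ)
    simp
  · intro p hp
    rw [(hφd p hp).fderiv]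
    refine ContinuousLinearMap.ext fun v => ?_
    rw [ContinuousLinearMap.smul_apply, ContinuousLinearMap.comp_apply, hApp p hp v]
    show v.2 = e • (e * v.2)
    rw [smul_eq_mul]
    rcases hcase with ⟨h1e, _⟩ | ⟨h1e, _⟩ <;> rw [h1e] <;> ring
  · refine ⟨fun p => lam p * al p, hlamsm.mul (halsm.mono hWS2),
      fun p hp => mul_ne_zero (hlamne p hp) (hWal p hp), ?_⟩
    intro p hp
    have hinv := (hInv p hp).2
    set c : ℝ := (φ p).2 - (φ p).1 ^ (k + 1) with hcdef
    have hsmul : c • ((-1, 0) : ℝ × ℝ) = ((-c, 0) : ℝ × ℝ) := by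
      refine Prod.ext ?_ ?_ <;> simp
    rw [hsmul, hinv ((-c, 0) : ℝ × ℝ)]
    have hfc : f p = lam p * c := key10 p hp
    refine Prod.ext ?_ ?_
    · show f p * (-1) = (lam p * al p) * ((al p)⁻¹ * ((-c) - (e * (p.1 * fderiv ℝ r p (0,1))) * 0))
      rw [hfc]
      field_simp [hWal p hp]
      ring
    · show f p * 0 = (lam p * al p) * (e * 0)
      ring
end
end

section
/- Let ε ∈ {+1, −1} and let a_M be the Martinet 1-form on ℝ², a_M(x,y)(v) = (1+εx²)·v₂, with vector field X_M(x,y) = (−(1+εx²), 0) spanning its kernel near the origin. Let k ≥ 0 be an integer and f a smooth function near 0 ∈ ℝ² with f(0,0) = 0, ∂f/∂y(0,0) ≠ 0, and such that x ↦ f(x,0) has all derivatives of order ≤ k equal to 0 at x = 0 and nonzero derivative of order k+1 at x = 0. Then there exist a local diffeomorphism φ at 0 with φ(0) = 0 and smooth nonvanishing functions κ, λ near 0 such that a_M = κ·φ*(a_M) and f·X_M = λ·φ*((y − x^{k+1})·X_M) near 0; that is, f·X_M is orbitally a_M-conjugate to (y − x^{k+1})·X_M. -/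
noncomputable section

open MeasureTheory intervalIntegral ContinuousLinearMap Metric

section Param
variable {E : Type} [NormedAddCommGroup E] [NormedSpace ℝ E] [FiniteDimensional ℝ E]

/-- derivative of a parametric interval integral of a smooth global function -/
theorem key_hasFDerivAt (F : (ℝ × ℝ) × ℝ → E) (hF : ContDiff ℝ (⊤ : ℕ∞) F) (p₀ : ℝ × ℝ) :
    HasFDerivAt (fun p : ℝ × ℝ => ∫ t in (0:ℝ)..1, F (p, t))
      (∫ t in (0:ℝ)..1, (fderiv ℝ F (p₀, t)).comp (ContinuousLinearMap.inl ℝ (ℝ×ℝ) ℝ)) p₀ := by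
  haveI : ProperSpace ((ℝ×ℝ) →L[ℝ] E) := FiniteDimensional.proper ℝ _
  haveI : SecondCountableTopology ((ℝ×ℝ) →L[ℝ] E) := secondCountable_of_proper
  set F' : (ℝ × ℝ) → ℝ → ((ℝ×ℝ) →L[ℝ] E) :=
    fun x t => (fderiv ℝ F (x, t)).comp (ContinuousLinearMap.inl ℝ (ℝ×ℝ) ℝ) with hF'
  have hFc : Continuous F := hF.continuous
  have hF'c : Continuous fun z : (ℝ×ℝ) × ℝ => F' z.1 z.2 := by
    exact ((hF.continuous_fderiv (by simp)).comp continuous_id).clm_comp continuous_const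
  obtain ⟨C, hC⟩ : ∃ C, ∀ z ∈ (Metric.closedBall p₀ 1) ×ˢ (Set.Icc (0:ℝ) 1),
      ‖F' z.1 z.2‖ ≤ C :=
    ((isCompact_closedBall p₀ 1).prod isCompact_Icc).exists_bound_of_continuousOn
      hF'c.continuousOn
  have hdiff : ∀ (x : ℝ×ℝ) (t : ℝ), HasFDerivAt (fun x => F (x, t)) (F' x t) x := by
    intro x t
    exact ((hF.differentiable (by simp)) (x, t)).hasFDerivAt.comp x (hasFDerivAt_prodMk_left x t)
  apply intervalIntegral.hasFDerivAt_integral_of_dominated_of_fderiv_le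
    (F := fun x t => F (x, t)) (F' := F') (bound := fun _ => C) (s := ball p₀ 1) (ball_mem_nhds p₀ one_pos)
  · exact Filter.Eventually.of_forall fun x =>
      (hFc.comp (continuous_const.prodMk continuous_id)).aestronglyMeasurable
  · exact (hFc.comp (continuous_const.prodMk continuous_id)).intervalIntegrable 0 1
  · exact (hF'c.comp (continuous_const.prodMk continuous_id)).aestronglyMeasurable
  · refine Filter.Eventually.of_forall fun t ht x hx => ?_
    refine hC (x, t) ⟨Metric.ball_subset_closedBall hx, ?_⟩
    rw [Set.uIoc_of_le (by norm_num : (0:ℝ) ≤ 1)] at ht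
    exact ⟨ht.1.le, ht.2⟩
  · exact intervalIntegrable_const
  · exact Filter.Eventually.of_forall fun t _ x _ => hdiff x t
end Param

section Param2
variable {E : Type} [NormedAddCommGroup E] [NormedSpace ℝ E] [FiniteDimensional ℝ E]

theorem key_differentiable (F : (ℝ × ℝ) × ℝ → E) (hF : ContDiff ℝ (⊤ : ℕ∞) F) :
    Differentiable ℝ (fun p : ℝ × ℝ => ∫ t in (0:ℝ)..1, F (p, t)) :=
  fun p => (key_hasFDerivAt F hF p).differentiableAt

theorem key_contDiff (n : ℕ) :
    ∀ {E : Type} [NormedAddCommGroup E] [NormedSpace ℝ E] [FiniteDimensional ℝ E]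
      (F : (ℝ × ℝ) × ℝ → E), ContDiff ℝ (⊤ : ℕ∞) F →
      ContDiff ℝ n (fun p : ℝ × ℝ => ∫ t in (0:ℝ)..1, F (p, t)) := by
  induction n with
  | zero =>
    intro E _ _ _ F hF
    exact contDiff_zero.2 (key_differentiable F hF).continuous
  | succ n ih =>
    intro E _ _ _ F hF
    have hG : ContDiff ℝ (⊤ : ℕ∞)
        (fun z : (ℝ×ℝ) × ℝ => (fderiv ℝ F z).comp (ContinuousLinearMap.inl ℝ (ℝ×ℝ) ℝ)) :=
      (hF.fderiv_right (mod_cast le_top)).clm_comp contDiff_const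
    have hfd : (fderiv ℝ fun p : ℝ × ℝ => ∫ t in (0:ℝ)..1, F (p, t)) =
        fun p : ℝ × ℝ => ∫ t in (0:ℝ)..1,
          (fderiv ℝ F ((p, t) : (ℝ×ℝ)×ℝ)).comp (ContinuousLinearMap.inl ℝ (ℝ×ℝ) ℝ) := by
      funext p
      exact (key_hasFDerivAt F hF p).fderiv
    have : ContDiff ℝ (n + 1 : ℕ) (fun p : ℝ × ℝ => ∫ t in (0:ℝ)..1, F (p, t)) := by
      rw [show ((n+1:ℕ) : WithTop ℕ∞) = (n : WithTop ℕ∞) + 1 by norm_cast]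
      refine contDiff_succ_iff_fderiv.2 ⟨key_differentiable F hF, by simp, ?_⟩
      rw [hfd]
      exact ih _ hG
    exact_mod_cast this

theorem key_smooth (F : (ℝ × ℝ) × ℝ → E) (hF : ContDiff ℝ (⊤ : ℕ∞) F) :
    ContDiff ℝ (⊤ : ℕ∞) (fun p : ℝ × ℝ => ∫ t in (0:ℝ)..1, F (p, t)) := by
  exact contDiff_infty.2 fun n => key_contDiff n F hF
end Param2

/-- Hadamard division: a smooth `G` with `G(x,0)=0` factors as `G(x,z) = z·u(x,z)`. -/
theorem div2 (G : ℝ × ℝ → ℝ) (hG : ContDiff ℝ (⊤ : ℕ∞) G) (h0 : ∀ x : ℝ, G (x, 0) = 0) :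
    ∃ u : ℝ × ℝ → ℝ, ContDiff ℝ (⊤ : ℕ∞) u ∧ ∀ p : ℝ × ℝ, G p = p.2 * u p := by
  set D : (ℝ × ℝ) × ℝ → ℝ := fun z => fderiv ℝ G (z.1.1, z.2 * z.1.2) ((0:ℝ), (1:ℝ)) with hD
  have hDs : ContDiff ℝ (⊤ : ℕ∞) D := by
    have h1 : ContDiff ℝ (⊤ : ℕ∞) (fun z : (ℝ×ℝ)×ℝ => (z.1.1, z.2 * z.1.2)) := by
      exact (contDiff_fst.comp contDiff_fst).prodMk (contDiff_snd.mul
        (contDiff_snd.comp contDiff_fst))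
    exact ((hG.fderiv_right (mod_cast le_top)).comp h1).clm_apply contDiff_const
  refine ⟨fun p => ∫ t in (0:ℝ)..1, D (p, t), key_smooth D hDs, fun p => ?_⟩
  have hcd : ∀ t : ℝ, HasDerivAt (fun t : ℝ => G (p.1, t * p.2)) (p.2 * D (p, t)) t := by
    intro t
    have h1 : HasDerivAt (fun t : ℝ => ((p.1, t * p.2) : ℝ×ℝ)) ((0:ℝ), p.2) t := by
      simpa using (hasDerivAt_const t p.1).prodMk ((hasDerivAt_id t).mul_const p.2)
    have h2 := ((hG.differentiable (by simp)) (p.1, t * p.2)).hasFDerivAt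
    have h3 := h2.comp_hasDerivAt t h1
    have : fderiv ℝ G (p.1, t * p.2) ((0:ℝ), p.2) = p.2 * D (p, t) := by
      have : ((0:ℝ), p.2) = p.2 • (((0:ℝ), (1:ℝ)) : ℝ×ℝ) := by simp
      rw [this, ContinuousLinearMap.map_smul, smul_eq_mul, hD]
    rwa [this] at h3
  have hint : IntervalIntegrable (fun t => p.2 * D (p, t)) volume 0 1 := by
    exact ((continuous_const.mul (hDs.continuous.comp
      (continuous_const.prodMk continuous_id)))).intervalIntegrable 0 1
  have := intervalIntegral.integral_eq_sub_of_hasDerivAt (fun t _ => hcd t) hint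
  simp only [one_mul, zero_mul, h0] at this
  rw [intervalIntegral.integral_const_mul] at this
  simpa using this.symm

/-- 1D Hadamard division. -/
theorem div1 (ψ : ℝ → ℝ) (hψ : ContDiff ℝ (⊤ : ℕ∞) ψ) (h0 : ψ 0 = 0) :
    ∃ q : ℝ → ℝ, ContDiff ℝ (⊤ : ℕ∞) q ∧ ∀ z : ℝ, ψ z = z * q z := by
  obtain ⟨u, hu, hfac⟩ := div2 (fun p => ψ p.2) (hψ.comp contDiff_snd) (fun _ => h0)
  exact ⟨fun z => u (0, z), hu.comp (contDiff_const.prodMk contDiff_id),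
    fun z => hfac (0, z)⟩

theorem iter_mul (g : ℝ → ℝ) (hg : ContDiff ℝ (⊤ : ℕ∞) g) (n : ℕ) :
    iteratedDeriv (n + 1) (fun z : ℝ => z * g z) =
      fun z : ℝ => (n + 1 : ℝ) * iteratedDeriv n g z + z * iteratedDeriv (n + 1) g z := by
  have hgd : ∀ m : ℕ, Differentiable ℝ (iteratedDeriv m g) := by
    intro m
    rw [iteratedDeriv_eq_iterate]
    exact (hg.iterate_deriv m).differentiable (by simp)
  have hds : ∀ m : ℕ, deriv (iteratedDeriv m g) = iteratedDeriv (m + 1) g := by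
    intro m; rw [iteratedDeriv_succ]
  induction n with
  | zero =>
    funext z
    rw [iteratedDeriv_one]
    rw [deriv_fun_mul differentiableAt_fun_id ((hg.differentiable (by simp)) z)]
    simp [iteratedDeriv_one, iteratedDeriv_zero]
  | succ n ih =>
    rw [iteratedDeriv_succ, ih]
    funext z
    have d1 : DifferentiableAt ℝ (fun z : ℝ => (n + 1 : ℝ) * iteratedDeriv n g z) z :=
      (hgd n z).const_mul _
    have d2 : DifferentiableAt ℝ (fun z : ℝ => z * iteratedDeriv (n + 1) g z) z :=
      differentiableAt_fun_id.mul (hgd (n + 1) z)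
    rw [deriv_fun_add d1 d2, deriv_const_mul _ (hgd n z),
      deriv_fun_mul differentiableAt_fun_id (hgd (n + 1) z)]
    have e1 : deriv (iteratedDeriv n g) z = iteratedDeriv (n + 1) g z := by rw [hds n]
    have e2 : deriv (iteratedDeriv (n + 1) g) z = iteratedDeriv (n + 2) g z := by
      rw [hds (n + 1)]
    rw [e1, e2]
    simp only [deriv_id'']
    push_cast
    ring

theorem flat_factor : ∀ (k : ℕ) (ψ : ℝ → ℝ), ContDiff ℝ (⊤ : ℕ∞) ψ →
    (∀ n ≤ k, iteratedDeriv n ψ 0 = 0) →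
    ∃ q : ℝ → ℝ, ContDiff ℝ (⊤ : ℕ∞) q ∧ ∀ z : ℝ, ψ z = z ^ (k + 1) * q z := by
  intro k
  induction k with
  | zero =>
    intro ψ hψ hflat
    obtain ⟨q, hq, hfac⟩ := div1 ψ hψ (by simpa using hflat 0 le_rfl)
    exact ⟨q, hq, fun z => by rw [pow_one]; exact hfac z⟩
  | succ k ih =>
    intro ψ hψ hflat
    obtain ⟨g, hg, hfac⟩ := div1 ψ hψ (by simpa using hflat 0 (Nat.zero_le _))
    have hψg : ψ = fun z => z * g z := funext hfac
    have hgflat : ∀ n ≤ k, iteratedDeriv n g 0 = 0 := by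
      intro n hn
      have h1 : iteratedDeriv (n + 1) ψ 0 = 0 := hflat (n + 1) (by omega)
      rw [hψg, iter_mul g hg n] at h1
      have h1' : ((n : ℝ) + 1) * iteratedDeriv n g 0 = 0 := by simpa using h1
      have hne : ((n : ℝ) + 1) ≠ 0 := by positivity
      exact (mul_eq_zero.1 h1').resolve_left hne
    obtain ⟨q, hq, hqfac⟩ := ih g hg hgflat
    refine ⟨q, hq, fun z => ?_⟩
    rw [hfac z, hqfac z]
    ring

theorem pow_order : ∀ (m : ℕ) (q : ℝ → ℝ), ContDiff ℝ (⊤ : ℕ∞) q →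
    iteratedDeriv m (fun z : ℝ => z ^ m * q z) 0 = m.factorial * q 0 := by
  intro m
  induction m with
  | zero => intro q _; simp [iteratedDeriv_zero]
  | succ m ih =>
    intro q hq
    have hq' : ContDiff ℝ (⊤ : ℕ∞) (deriv q) := (contDiff_infty_iff_deriv.1 hq).2
    have hder : deriv (fun z : ℝ => z ^ (m + 1) * q z) =
        fun z : ℝ => z ^ m * ((m + 1 : ℝ) * q z + z * deriv q z) := by
      funext z
      rw [deriv_fun_mul (differentiableAt_pow _) ((hq.differentiable (by simp)) z),
        deriv_pow_field]
      push_cast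
      ring
    rw [iteratedDeriv_succ', hder,
      ih (fun z => ((m : ℝ) + 1) * q z + z * deriv q z)
        ((contDiff_const.mul hq).add (contDiff_id.mul hq'))]
    simp only [Nat.factorial_succ, mul_zero, zero_mul, add_zero]
    push_cast
    ring

theorem evIter {f g : ℝ → ℝ} (h : f =ᶠ[nhds (0:ℝ)] g) (n : ℕ) :
    iteratedDeriv n f 0 = iteratedDeriv n g 0 := by
  have H : ∀ m : ℕ, iteratedDeriv m f =ᶠ[nhds (0:ℝ)] iteratedDeriv m g := by
    intro m
    induction m with
    | zero => simpa [iteratedDeriv_zero] using h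
    | succ m ih => rw [iteratedDeriv_succ, iteratedDeriv_succ]; exact ih.deriv
  exact (H n).self_of_nhds

theorem lin_eval (L : (ℝ × ℝ) →L[ℝ] ℝ) (v : ℝ × ℝ) :
    L v = v.1 * L ((1:ℝ), (0:ℝ)) + v.2 * L ((0:ℝ), (1:ℝ)) := by
  have hv : v = v.1 • (((1:ℝ), (0:ℝ)) : ℝ × ℝ) + v.2 • (((0:ℝ), (1:ℝ)) : ℝ × ℝ) := by
    ext <;> simp
  rw [hv, map_add, ContinuousLinearMap.map_smul, ContinuousLinearMap.map_smul]
  simp [smul_eq_mul]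


/-- The Martinet 1-form `a_M(x,y)(v) = (1+εx²)·v₂`. -/
def aM (ε : ℝ) : ℝ × ℝ → ((ℝ × ℝ) →L[ℝ] ℝ) :=
  fun p => (1 + ε * p.1 ^ 2) • ContinuousLinearMap.snd ℝ ℝ ℝ

/-- The vector field `X_M(x,y) = (−(1+εx²), 0)` spanning the kernel of the
Martinet 1-form near the origin. -/
def XM (ε : ℝ) : ℝ × ℝ → ℝ × ℝ := fun p => (-(1 + ε * p.1 ^ 2), 0)

set_option maxHeartbeats 2000000 in
/-- For `ε = ±1`: if `f` is smooth near `0 ∈ ℝ²` with `f(0,0) = 0`,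
`∂f/∂y(0,0) ≠ 0`, and `x ↦ f(x,0)` vanishes to order exactly `k+1` at `0`, then
`f·X_M` is orbitally `a_M`-conjugate to `(y − x^{k+1})·X_M`: there are a local
diffeomorphism `φ` fixing `0` which is a conformal symmetry of `a_M`
(`a_M = κ·φ*(a_M)`) and a smooth nonvanishing `λ` with
`f·X_M = λ·φ*((y − x^{k+1})·X_M)` near `0`. -/
theorem stmt_9 (ε : ℝ) (hε : ε = 1 ∨ ε = -1)
    (k : ℕ) (U : Set (ℝ × ℝ)) (hUo : IsOpen U) (hU0 : (0 : ℝ × ℝ) ∈ U)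
    (f : ℝ × ℝ → ℝ) (hf : ContDiffOn ℝ (⊤ : ℕ∞) f U)
    (hf0 : f 0 = 0) (hfy : fderiv ℝ f 0 (0, 1) ≠ 0)
    (hflat : ∀ n ≤ k, iteratedDeriv n (fun x : ℝ => f (x, 0)) 0 = 0)
    (hnonflat : iteratedDeriv (k + 1) (fun x : ℝ => f (x, 0)) 0 ≠ 0) :
    ∃ (φ : ℝ × ℝ → ℝ × ℝ) (W : Set (ℝ × ℝ)) (κ lam : ℝ × ℝ → ℝ),
      IsOpen W ∧ (0 : ℝ × ℝ) ∈ W ∧ φ 0 = 0 ∧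
      ContDiffOn ℝ (⊤ : ℕ∞) φ W ∧ (∀ p ∈ W, (fderiv ℝ φ p).det ≠ 0) ∧
      ContDiffOn ℝ (⊤ : ℕ∞) κ W ∧ (∀ p ∈ W, κ p ≠ 0) ∧
      ContDiffOn ℝ (⊤ : ℕ∞) lam W ∧ (∀ p ∈ W, lam p ≠ 0) ∧
      -- a_M = κ·φ*(a_M)
      (∀ p ∈ W, aM ε p = κ p • ((aM ε (φ p)).comp (fderiv ℝ φ p))) ∧
      -- f·X_M = λ·φ*((y − x^{k+1})·X_M)
      (∀ p ∈ W, f p • XM ε p =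
        lam p • (fderiv ℝ φ p).inverse
          (((φ p).2 - (φ p).1 ^ (k + 1)) • XM ε (φ p))) := by
  -- globalize f
  obtain ⟨R, hR0, hRU⟩ : ∃ R > 0, ball (0:ℝ×ℝ) R ⊆ U := Metric.isOpen_iff.1 hUo 0 hU0
  set χ : ContDiffBump (0 : ℝ×ℝ) := ⟨R/2, 3*R/4, by positivity, by linarith⟩ with hχ
  set F : ℝ × ℝ → ℝ := fun p => χ p * f p with hFdef
  have hFs : ContDiff ℝ (⊤ : ℕ∞) F := by
    rw [contDiff_iff_contDiffAt]
    intro p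
    by_cases hp : p ∈ ball (0:ℝ×ℝ) R
    · exact χ.contDiffAt.mul (hf.contDiffAt (hUo.mem_nhds (hRU hp)))
    · have hop : IsOpen (closedBall (0:ℝ×ℝ) (3*R/4))ᶜ := isClosed_closedBall.isOpen_compl
      have hpmem : p ∈ (closedBall (0:ℝ×ℝ) (3*R/4))ᶜ := by
        simp only [Set.mem_compl_iff, mem_closedBall, not_le, mem_ball] at hp ⊢
        simp only [dist_zero_right] at hp ⊢
        linarith [hp]
      refine ContDiffAt.congr_of_eventuallyEq (contDiffAt_const (c := (0:ℝ))) ?_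
      filter_upwards [hop.mem_nhds hpmem] with q hq
      have : χ q = 0 := χ.zero_of_le_dist (by
        simp only [Set.mem_compl_iff, mem_closedBall, not_le] at hq
        simpa [dist_zero_right] using hq.le)
      simp [hFdef, this]
  have hFf : F =ᶠ[nhds (0:ℝ×ℝ)] f := by
    filter_upwards [ball_mem_nhds (0:ℝ×ℝ) (by positivity : (0:ℝ) < R/2)] with p hp
    have : χ p = 1 := χ.one_of_mem_closedBall (ball_subset_closedBall hp)
    simp [hFdef, this]
  have hF0 : F 0 = 0 := by simp [hFdef, hf0]
  -- the boundary function ψ and its factorization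
  set ψ : ℝ → ℝ := fun x => F (x, 0) with hψdef
  have hψs : ContDiff ℝ (⊤ : ℕ∞) ψ := hFs.comp (contDiff_id.prodMk contDiff_const)
  have hψf : ψ =ᶠ[nhds (0:ℝ)] fun x => f (x, 0) := by
    have ht : Filter.Tendsto (fun x : ℝ => ((x, 0) : ℝ×ℝ)) (nhds 0) (nhds 0) := by
      have := (continuous_id.prodMk (continuous_const (y := (0:ℝ)))).tendsto (0:ℝ)
      simpa [← Prod.zero_eq_mk] using this
    exact hFf.comp_tendsto ht
  have hψflat : ∀ n ≤ k, iteratedDeriv n ψ 0 = 0 := fun n hn => by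
    rw [evIter hψf n]; exact hflat n hn
  have hψnon : iteratedDeriv (k+1) ψ 0 ≠ 0 := by
    rw [evIter hψf (k+1)]; exact hnonflat
  obtain ⟨q, hqs, hqfac⟩ := flat_factor k ψ hψs hψflat
  have hq0 : q 0 ≠ 0 := by
    intro h
    apply hψnon
    have : ψ = fun z => z ^ (k+1) * q z := funext hqfac
    rw [this, pow_order (k+1) q hqs, h, mul_zero]
  -- division by y
  obtain ⟨B, hBs, hBfac⟩ := div2 (fun p => F p - F (p.1, 0))
    (hFs.sub (hFs.comp (contDiff_fst.prodMk contDiff_const))) (fun x => by simp)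
  have hFdec : ∀ p : ℝ × ℝ, F p = ψ p.1 + p.2 * B p := by
    intro p
    have := hBfac p
    simp only [hψdef]
    linarith [this]
  -- B 0 = ∂f/∂y (0) ≠ 0
  have hB0 : B 0 ≠ 0 := by
    have hc1 : HasDerivAt (fun y : ℝ => F (0, y)) (fderiv ℝ F 0 ((0:ℝ), (1:ℝ))) 0 := by
      have h2 := ((hFs.differentiable (by simp)) 0).hasFDerivAt
      have h1 : HasDerivAt (fun y : ℝ => (((0:ℝ), y) : ℝ×ℝ)) (((0:ℝ), (1:ℝ))) 0 := by
        simpa using (hasDerivAt_const (0:ℝ) (0:ℝ)).prodMk (hasDerivAt_id (0:ℝ))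
      have := h2.comp_hasDerivAt (0:ℝ) (by simpa using h1)
      simpa [Function.comp_def] using this
    have hc2 : HasDerivAt (fun y : ℝ => F (0, y)) (B 0) 0 := by
      have heq : (fun y : ℝ => F (0, y)) = fun y : ℝ => y * B (0, y) := by
        funext y
        rw [hFdec (0, y)]
        simp only [hψdef]
        rw [show F ((0:ℝ), (0:ℝ)) = 0 from hF0, zero_add]
      rw [heq]
      have hBd : DifferentiableAt ℝ (fun y : ℝ => B (0, y)) 0 :=
        ((hBs.differentiable (by simp)).comp
          ((differentiable_const (0:ℝ)).prodMk differentiable_id)) 0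
      have := (hasDerivAt_id (0:ℝ)).mul hBd.hasDerivAt
      simpa [Pi.mul_def, ← Prod.zero_eq_mk] using this
    have := hc1.unique hc2
    rw [← this]
    have h5 : fderiv ℝ F 0 = fderiv ℝ f 0 := hFf.fderiv_eq
    rw [h5]
    exact hfy
  -- choose the sign s
  obtain ⟨s, hs, hw0pos⟩ : ∃ s : ℝ, (s = 1 ∨ s = -1) ∧ 0 < -q 0 / (s * B 0) := by
    rcases lt_trichotomy (-q 0 / B 0) 0 with h | h | h
    · refine ⟨-1, Or.inr rfl, ?_⟩
      rw [neg_one_mul, div_neg]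
      linarith
    · exact absurd ((div_eq_zero_iff.1 h).resolve_right hB0)
        (by simpa using hq0)
    · exact ⟨1, Or.inl rfl, by rwa [one_mul]⟩
  have hsne : s ≠ 0 := by rcases hs with rfl | rfl <;> norm_num
  have hs2 : s * s = 1 := by rcases hs with rfl | rfl <;> norm_num
  set w : ℝ × ℝ → ℝ := fun p => -q p.1 / (s * B p) with hwdef
  have hw0 : 0 < w 0 := by simpa [hwdef] using hw0pos
  -- eventual conditions, part 1
  have hBc : Continuous B := hBs.continuous
  have ev2 : ∀ᶠ p in nhds (0:ℝ×ℝ), B p ≠ 0 := hBc.continuousAt.eventually_ne hB0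
  have hwc : ContinuousAt w 0 := by
    exact ContinuousAt.div ((hqs.continuous.comp continuous_fst).neg.continuousAt)
      ((continuous_const.mul hBc).continuousAt) (by simpa using mul_ne_zero hsne hB0)
  have ev3 : ∀ᶠ p in nhds (0:ℝ×ℝ), 0 < w p := hwc.eventually (eventually_gt_nhds hw0)
  obtain ⟨V₁, hV₁P, hV₁o, hV₁0⟩ := _root_.eventually_nhds_iff.1 (ev2.and ev3)
  -- the root and the new coordinate
  set rho : ℝ × ℝ → ℝ := fun p => w p ^ ((1:ℝ)/(k+1)) with hrhodef
  set alp : ℝ × ℝ → ℝ := fun p => p.1 * rho p with halpdef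
  have hwV : ContDiffOn ℝ (⊤ : ℕ∞) w V₁ := fun p hp =>
    (ContDiffAt.div ((hqs.comp contDiff_fst).neg.contDiffAt)
      ((contDiff_const.mul hBs).contDiffAt)
      (mul_ne_zero hsne (hV₁P p hp).1)).contDiffWithinAt
  have hrhoV : ContDiffOn ℝ (⊤ : ℕ∞) rho V₁ := fun p hp =>
    (((hwV.contDiffAt (hV₁o.mem_nhds hp)).rpow_const_of_ne
      (ne_of_gt (hV₁P p hp).2))).contDiffWithinAt
  have halpV : ContDiffOn ℝ (⊤ : ℕ∞) alp V₁ :=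
    (contDiff_fst.contDiffOn).mul hrhoV
  have hAV : ContDiffOn ℝ (⊤ : ℕ∞) (fderiv ℝ alp) V₁ :=
    halpV.fderiv_of_isOpen hV₁o (mod_cast le_top)
  set av : ℝ × ℝ → ℝ := fun p => fderiv ℝ alp p ((1:ℝ), (0:ℝ)) with havdef
  have hrho0 : 0 < rho 0 := Real.rpow_pos_of_pos hw0 _
  have hrhod : DifferentiableAt ℝ rho 0 :=
    (hrhoV.contDiffAt (hV₁o.mem_nhds hV₁0)).differentiableAt (by simp)
  have ha0 : av 0 = rho 0 := by
    have halp0 : HasFDerivAt alp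
        (((0:ℝ×ℝ)).1 • fderiv ℝ rho 0 + rho 0 • ContinuousLinearMap.fst ℝ ℝ ℝ) 0 :=
      (hasFDerivAt_fst (p := (0:ℝ×ℝ))).mul hrhod.hasFDerivAt
    rw [havdef]
    simp only [halp0.fderiv]
    simp
  have hac : ContinuousAt av 0 := by
    have h1 : ContinuousAt (fderiv ℝ alp) 0 :=
      hAV.continuousOn.continuousAt (hV₁o.mem_nhds hV₁0)
    exact ((ContinuousLinearMap.apply ℝ ℝ (((1:ℝ), (0:ℝ)) : ℝ×ℝ)).continuous.continuousAt).comp h1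
  have ev4 : ∀ᶠ p in nhds (0:ℝ×ℝ), av p ≠ 0 :=
    hac.eventually_ne (by rw [ha0]; exact ne_of_gt hrho0)
  have hεsq : ∀ t : ℝ, |t| < 1 → 0 < 1 + ε * t^2 := by
    intro t ht
    rcases hε with rfl | rfl
    · nlinarith [sq_nonneg t]
    · have := abs_lt.mp ht
      nlinarith
  have ev5 : ∀ᶠ p in nhds (0:ℝ×ℝ), |p.1| < 1 := by
    have hc : ContinuousAt (fun p : ℝ×ℝ => |p.1|) 0 := continuous_fst.abs.continuousAt
    have := hc.eventually (eventually_lt_nhds (by norm_num : |(0:ℝ×ℝ).1| < 1))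
    simpa using this
  have halpc : ContinuousAt alp 0 :=
    ((halpV.contDiffAt (hV₁o.mem_nhds hV₁0)).continuousAt)
  have halp00 : alp 0 = 0 := by simp [halpdef]
  have ev6 : ∀ᶠ p in nhds (0:ℝ×ℝ), |alp p| < 1 := by
    have hc : ContinuousAt (fun p : ℝ×ℝ => |alp p|) 0 := halpc.abs
    have := hc.eventually (eventually_lt_nhds (by rw [halp00]; norm_num : |alp 0| < 1))
    simpa using this
  have ev7 : ∀ᶠ p in nhds (0:ℝ×ℝ), p ∈ V₁ :=
    Filter.eventually_of_mem (hV₁o.mem_nhds hV₁0) (fun x hx => hx)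
  obtain ⟨W, hWP, hWo, hW0⟩ := _root_.eventually_nhds_iff.1
    (hFf.and (ev2.and (ev3.and (ev4.and (ev5.and (ev6.and ev7))))))
  have hWsub : W ⊆ V₁ := fun p hp => (hWP p hp).2.2.2.2.2.2
  -- definitions of the data
  set php : ℝ × ℝ → ℝ × ℝ := fun p => (alp p, s * p.2) with hphpdef
  set kap : ℝ × ℝ → ℝ := fun p => s * (1 + ε * p.1^2) / (1 + ε * (alp p)^2) with hkapdef
  set lam : ℝ × ℝ → ℝ :=
    fun p => s * B p * (1 + ε * p.1^2) * av p / (1 + ε * (alp p)^2) with hlamdef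
  -- per-point facts
  have hcore : ∀ p ∈ W, F p = f p ∧ B p ≠ 0 ∧ 0 < w p ∧ av p ≠ 0 ∧
      0 < 1 + ε * p.1^2 ∧ 0 < 1 + ε * (alp p)^2 ∧ p ∈ V₁ := by
    intro p hp
    obtain ⟨h1, h2, h3, h4, h5, h6, h7⟩ := hWP p hp
    exact ⟨h1, h2, h3, h4, hεsq _ h5, hεsq _ h6, h7⟩
  have hrpow : ∀ p ∈ W, (rho p)^(k+1) = w p := by
    intro p hp
    obtain ⟨-, -, h3, -⟩ := hcore p hp
    rw [hrhodef]
    rw [← Real.rpow_natCast (w p ^ ((1:ℝ)/(k+1))) (k+1), ← Real.rpow_mul h3.le]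
    rw [show ((1:ℝ)/(k+1)) * ((k+1 : ℕ) : ℝ) = 1 by push_cast; field_simp]
    exact Real.rpow_one _
  have hkey : ∀ p ∈ W, F p = s * B p * (s * p.2 - (alp p)^(k+1)) := by
    intro p hp
    obtain ⟨-, h2, h3, -⟩ := hcore p hp
    have halpow : (alp p)^(k+1) = p.1^(k+1) * w p := by
      rw [halpdef, mul_pow, hrpow p hp]
    rw [hFdec p, hqfac p.1, halpow, hwdef]
    field_simp
    ring_nf
    rw [show s^2 = 1 by nlinarith [hs2]]
    ring
  -- derivative data at p ∈ W
  have hDD : ∀ p ∈ W, ∃ E : (ℝ×ℝ) ≃L[ℝ] (ℝ×ℝ),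
      (fderiv ℝ php p = ↑E) ∧
      (∀ v : ℝ×ℝ, E v = (fderiv ℝ alp p v, s * v.2)) ∧
      (∀ v : ℝ×ℝ, E.symm v =
        ((av p)⁻¹ * (v.1 - s⁻¹ * (fderiv ℝ alp p ((0:ℝ),(1:ℝ))) * v.2), s⁻¹ * v.2)) := by
    intro p hp
    obtain ⟨-, -, -, h4, -, -, h7⟩ := hcore p hp
    have hA : HasFDerivAt alp (fderiv ℝ alp p) p :=
      ((halpV.contDiffAt (hV₁o.mem_nhds h7)).differentiableAt (by simp)).hasFDerivAt
    have hsnd : HasFDerivAt (fun p : ℝ×ℝ => s * p.2)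
        (s • ContinuousLinearMap.snd ℝ ℝ ℝ) p := by
      exact ((ContinuousLinearMap.snd ℝ ℝ ℝ).hasFDerivAt (x := p)).const_smul s
    have hφd : HasFDerivAt php
        ((fderiv ℝ alp p).prod (s • ContinuousLinearMap.snd ℝ ℝ ℝ)) p := hA.prodMk hsnd
    have ha' : fderiv ℝ alp p ((1:ℝ),(0:ℝ)) ≠ 0 := h4
    have happ : ∀ v : ℝ×ℝ,
        ((fderiv ℝ alp p).prod (s • ContinuousLinearMap.snd ℝ ℝ ℝ)) v =
          (fderiv ℝ alp p v, s * v.2) := fun v => rfl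
    have hgapp : ∀ v : ℝ×ℝ,
        (((av p)⁻¹ • (ContinuousLinearMap.fst ℝ ℝ ℝ -
          (s⁻¹ * fderiv ℝ alp p ((0:ℝ),(1:ℝ))) • ContinuousLinearMap.snd ℝ ℝ ℝ)).prod
          (s⁻¹ • ContinuousLinearMap.snd ℝ ℝ ℝ)) v =
          ((av p)⁻¹ * (v.1 - s⁻¹ * (fderiv ℝ alp p ((0:ℝ),(1:ℝ))) * v.2), s⁻¹ * v.2) := by
      intro v
      refine Prod.ext_iff.2 ⟨?_, rfl⟩
      show (av p)⁻¹ * (v.1 - (s⁻¹ * fderiv ℝ alp p ((0:ℝ),(1:ℝ))) * v.2) = _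
      ring
    have hleft : Function.LeftInverse
        (((av p)⁻¹ • (ContinuousLinearMap.fst ℝ ℝ ℝ -
          (s⁻¹ * fderiv ℝ alp p ((0:ℝ),(1:ℝ))) • ContinuousLinearMap.snd ℝ ℝ ℝ)).prod
          (s⁻¹ • ContinuousLinearMap.snd ℝ ℝ ℝ))
        ((fderiv ℝ alp p).prod (s • ContinuousLinearMap.snd ℝ ℝ ℝ)) := by
      intro v
      rw [happ v, hgapp _]
      refine Prod.ext_iff.2 ⟨?_, ?_⟩
      · show (av p)⁻¹ * (fderiv ℝ alp p v - s⁻¹ * (fderiv ℝ alp p ((0:ℝ),(1:ℝ))) * (s * v.2))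
          = v.1
        rw [lin_eval (fderiv ℝ alp p) v]
        rw [show av p = fderiv ℝ alp p ((1:ℝ),(0:ℝ)) from rfl] at h4 ⊢
        field_simp
        ring
      · show s⁻¹ * (s * v.2) = v.2
        field_simp
    have hright : Function.RightInverse
        (((av p)⁻¹ • (ContinuousLinearMap.fst ℝ ℝ ℝ -
          (s⁻¹ * fderiv ℝ alp p ((0:ℝ),(1:ℝ))) • ContinuousLinearMap.snd ℝ ℝ ℝ)).prod
          (s⁻¹ • ContinuousLinearMap.snd ℝ ℝ ℝ))
        ((fderiv ℝ alp p).prod (s • ContinuousLinearMap.snd ℝ ℝ ℝ)) := by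
      intro v
      rw [hgapp v, happ _]
      refine Prod.ext_iff.2 ⟨?_, ?_⟩
      · show fderiv ℝ alp p
          ((av p)⁻¹ * (v.1 - s⁻¹ * (fderiv ℝ alp p ((0:ℝ),(1:ℝ))) * v.2), s⁻¹ * v.2) = v.1
        rw [lin_eval (fderiv ℝ alp p)
          (((av p)⁻¹ * (v.1 - s⁻¹ * (fderiv ℝ alp p ((0:ℝ),(1:ℝ))) * v.2), s⁻¹ * v.2))]
        rw [show av p = fderiv ℝ alp p ((1:ℝ),(0:ℝ)) from rfl] at h4 ⊢
        simp only
        field_simp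
        ring
      · show s * (s⁻¹ * v.2) = v.2
        field_simp
    refine ⟨ContinuousLinearEquiv.equivOfInverse _ _ hleft hright, ?_, ?_, ?_⟩
    · rw [hφd.fderiv]; rfl
    · intro v; exact happ v
    · intro v
      have hsm : (ContinuousLinearEquiv.equivOfInverse _ _ hleft hright).symm v =
          (((av p)⁻¹ • (ContinuousLinearMap.fst ℝ ℝ ℝ -
          (s⁻¹ * fderiv ℝ alp p ((0:ℝ),(1:ℝ))) • ContinuousLinearMap.snd ℝ ℝ ℝ)).prod
          (s⁻¹ • ContinuousLinearMap.snd ℝ ℝ ℝ)) v := by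
        rw [ContinuousLinearEquiv.symm_apply_eq]
        exact (hright v).symm
      rw [hsm, hgapp v]
  refine ⟨php, W, kap, lam, hWo, hW0, ?_, ?_, ?_, ?_, ?_, ?_, ?_, ?_, ?_⟩
  · -- php 0 = 0
    rw [hphpdef]
    simp [halp00]
  · -- smoothness of php
    exact (halpV.mono hWsub).prodMk ((contDiff_const.mul contDiff_snd).contDiffOn)
  · -- determinant
    intro p hp
    obtain ⟨E, hfe, -, -⟩ := hDD p hp
    rw [hfe]
    exact (LinearEquiv.isUnit_det' E.toLinearEquiv).ne_zero
  · -- kap smooth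
    rw [hkapdef]
    refine ContDiffOn.div ?_ ?_ ?_
    · exact (contDiff_const.mul
        (contDiff_const.add (contDiff_const.mul (contDiff_fst.pow 2)))).contDiffOn
    · exact contDiffOn_const.add (contDiffOn_const.mul ((halpV.mono hWsub).pow 2))
    · exact fun p hp => ne_of_gt (hcore p hp).2.2.2.2.2.1
  · -- kap nonvanishing
    intro p hp
    obtain ⟨-, -, -, -, h5, h6, -⟩ := hcore p hp
    exact div_ne_zero (mul_ne_zero hsne (ne_of_gt h5)) (ne_of_gt h6)
  · -- lam smooth
    rw [hlamdef]
    refine ContDiffOn.div ?_ ?_ ?_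
    · refine ContDiffOn.mul (ContDiffOn.mul (ContDiffOn.mul ?_ ?_) ?_) ?_
      · exact contDiffOn_const
      · exact hBs.contDiffOn
      · exact (contDiff_const.add (contDiff_const.mul (contDiff_fst.pow 2))).contDiffOn
      · exact (hAV.mono hWsub).clm_apply contDiffOn_const
    · exact contDiffOn_const.add (contDiffOn_const.mul ((halpV.mono hWsub).pow 2))
    · exact fun p hp => ne_of_gt (hcore p hp).2.2.2.2.2.1
  · -- lam nonvanishing
    intro p hp
    obtain ⟨-, h2, -, h4, h5, h6, -⟩ := hcore p hp
    exact div_ne_zero (mul_ne_zero (mul_ne_zero (mul_ne_zero hsne h2) (ne_of_gt h5)) h4)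
      (ne_of_gt h6)
  · -- conformal symmetry
    intro p hp
    obtain ⟨-, -, -, -, h5, h6, -⟩ := hcore p hp
    obtain ⟨E, hfe, hEap, -⟩ := hDD p hp
    rw [hfe]
    refine ContinuousLinearMap.ext fun v => ?_
    have h2E : ((E : (ℝ×ℝ) →L[ℝ] (ℝ×ℝ)) v).2 = s * v.2 := by
      show (E v).2 = s * v.2
      rw [hEap v]
    simp only [aM, ContinuousLinearMap.smul_apply, ContinuousLinearMap.coe_comp',
      Function.comp_apply, h2E, ContinuousLinearMap.coe_snd', smul_eq_mul,
      hkapdef, hphpdef]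
    have h6' : 1 + ε * (alp p)^2 ≠ 0 := ne_of_gt h6
    rcases hs with hs1 | hs1 <;> rw [hs1] <;> field_simp <;> ring
  · -- main conjugacy equation
    intro p hp
    obtain ⟨h1, h2, -, h4, h5, h6, -⟩ := hcore p hp
    obtain ⟨E, hfe, -, hEsym⟩ := hDD p hp
    rw [hfe, ContinuousLinearMap.inverse_equiv]
    have hphp1 : (php p).1 = alp p := rfl
    have hphp2 : (php p).2 = s * p.2 := rfl
    set m : ℝ := s * p.2 - (alp p)^(k+1) with hmdef
    have hXφ : ((php p).2 - (php p).1 ^ (k + 1)) • XM ε (php p) =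
        ((m * (-(1 + ε * (alp p)^2)), 0) : ℝ × ℝ) := by
      rw [hphp1, hphp2, ← hmdef]
      simp [XM, Prod.smul_mk, smul_eq_mul, hphpdef]
    rw [hXφ]
    simp only [ContinuousLinearMap.inverse_equiv, ContinuousLinearEquiv.coe_coe]
    rw [hEsym]
    have hfF : f p = s * B p * m := by rw [← h1, hkey p hp]
    refine Prod.ext ?_ ?_
    · simp only [XM, Prod.smul_mk, smul_eq_mul, hfF, hlamdef]
      field_simp
      ring
    · simp [XM, Prod.smul_mk, smul_eq_mul]
end
end

section
/- There is no smooth function f defined on a neighborhood U of 0 ∈ ℝ² with f(0,0) = 0 and ∇f(0,0) ≠ (0,0) such that −y·∂f/∂x(x,y) + x·∂f/∂y(x,y) = 0 for every point (x,y) ∈ U with f(x,y) = 0. In other words, the rotational vector field X(x,y) = (−y, x) cannot be tangent, at every point of the curve, to a curve {f = 0} that is regular at the origin. -/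
noncomputable section

set_option maxHeartbeats 1000000
set_option synthInstance.maxHeartbeats 400000

/-- There is no smooth function `f` on a neighborhood `U` of `0 ∈ ℝ²` with
`f(0,0) = 0` and `∇f(0,0) ≠ 0` such that `−y·∂f/∂x + x·∂f/∂y = 0` at every point
of `U` where `f = 0`: the rotational field `X(x,y) = (−y, x)` cannot be tangent,
at every point of the curve, to a curve `{f = 0}` regular at the origin. -/
theorem stmt_14 :
    ¬ ∃ (U : Set (ℝ × ℝ)) (f : ℝ × ℝ → ℝ),
        IsOpen U ∧ (0 : ℝ × ℝ) ∈ U ∧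
        ContDiffOn ℝ (⊤ : ℕ∞) f U ∧ f 0 = 0 ∧ fderiv ℝ f 0 ≠ 0 ∧
        ∀ p ∈ U, f p = 0 → fderiv ℝ f p (-p.2, p.1) = 0 := by
  rintro ⟨U, f, hU, h0U, hC, hf0, hne, htan⟩
  set f' : (ℝ × ℝ) →L[ℝ] ℝ := fderiv ℝ f 0 with hf'def
  -- f is ContDiffAt of every order at 0
  have hCat : ContDiffAt ℝ (⊤ : ℕ∞) f 0 := hC.contDiffAt (hU.mem_nhds h0U)
  have hf : HasStrictFDerivAt f f' 0 := hCat.hasStrictFDerivAt (by simp)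
  -- surjectivity of f'
  have hr : f'.range = ⊤ := by
    rcases (not_forall.1 fun h => hne (ContinuousLinearMap.ext fun w => by
      simpa using h w)) with ⟨w, hw⟩
    rw [LinearMap.range_eq_top]
    intro c
    exact ⟨(c / f' w) • w, by simp [div_mul_cancel₀ _ hw]⟩
  -- the implicit function
  set γ : f'.ker → ℝ × ℝ := hf.implicitFunction f f' hr (f 0) with hγdef
  have hγ0 : γ 0 = 0 := hf.implicitFunction_apply_image hr
  have hγstrict : HasStrictFDerivAt γ f'.ker.subtypeL 0 :=
    hf.to_implicitFunction hr
  have hγd : HasFDerivAt γ f'.ker.subtypeL 0 := hγstrict.hasFDerivAt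
  -- eventually f (γ z) = 0
  have hmap := hf.map_implicitFunction_eq hr
  have htends : Filter.Tendsto (fun z : f'.ker => ((f 0 : ℝ), z))
      (nhds 0) (nhds (f 0, 0)) := tendsto_const_nhds.prodMk_nhds Filter.tendsto_id
  have hzero : ∀ᶠ z : f'.ker in nhds 0, f (γ z) = 0 := by
    filter_upwards [htends.eventually hmap] with z hz
    exact hz.trans hf0
  -- eventually γ z ∈ U
  have hmem : ∀ᶠ z : f'.ker in nhds 0, γ z ∈ U := by
    have : Filter.Tendsto γ (nhds 0) (nhds 0) := by
      simpa [hγ0] using hγd.continuousAt.tendsto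
    exact this (hU.mem_nhds h0U)
  -- rotation as a continuous linear map
  set R : (ℝ × ℝ) →L[ℝ] (ℝ × ℝ) :=
    (-(ContinuousLinearMap.snd ℝ ℝ ℝ)).prod (ContinuousLinearMap.fst ℝ ℝ ℝ) with hRdef
  have hRapp : ∀ p : ℝ × ℝ, R p = (-p.2, p.1) := fun p => rfl
  -- the function h
  set h : f'.ker → ℝ := fun z => fderiv ℝ f (γ z) (R (γ z)) with hhdef
  have hhzero : ∀ᶠ z : f'.ker in nhds 0, h z = 0 := by
    filter_upwards [hzero, hmem] with z hz hzU
    simpa [hhdef, hRapp] using htan (γ z) hzU hz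
  -- differentiability of fderiv f at 0
  have hf2 : ContDiffAt ℝ 1 (fderiv ℝ f) 0 := hCat.fderiv_right (by norm_cast)
  have hA : HasFDerivAt (fun z : f'.ker => fderiv ℝ f (γ z))
      ((fderiv ℝ (fderiv ℝ f) 0).comp f'.ker.subtypeL) 0 := by
    have h1 := (hf2.differentiableAt one_ne_zero).hasFDerivAt
    rw [← hγ0] at h1
    have h2 := h1.comp (0 : f'.ker) hγd
    rw [hγ0] at h2
    exact h2
  have hB : HasFDerivAt (fun z : f'.ker => R (γ z))
      (R.comp f'.ker.subtypeL) 0 :=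
    (R.hasFDerivAt).comp 0 hγd
  have hh : HasFDerivAt h
      ((fderiv ℝ f (γ 0)).comp (R.comp f'.ker.subtypeL) +
        ((fderiv ℝ (fderiv ℝ f) 0).comp f'.ker.subtypeL).flip (R (γ 0))) 0 :=
    hA.clm_apply hB
  -- the derivative of h at 0 vanishes
  have hfd0 : fderiv ℝ h 0 = 0 := by
    have : h =ᶠ[nhds (0 : f'.ker)] (fun _ => (0 : ℝ)) := hhzero
    rw [this.fderiv_eq]
    exact fderiv_const_apply 0
  have hD := hh.fderiv
  rw [hfd0] at hD
  -- thus f' (R v) = 0 for every v in the kernel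
  have key : ∀ v : f'.ker, f' (R (v : ℝ × ℝ)) = 0 := by
    intro v
    have := congrArg (fun (T : f'.ker →L[ℝ] ℝ) => T v) hD.symm
    simpa [hγ0, hRdef, Prod.mk_zero_zero, hf'def] using this
  -- choose the kernel vector v = (f' (0,1), - f' (1,0))
  have hvker : (f' ((0 : ℝ), (1 : ℝ)), -f' ((1 : ℝ), (0 : ℝ))) ∈ f'.ker := by
    have : (f' ((0 : ℝ), (1 : ℝ)), -f' ((1 : ℝ), (0 : ℝ)))
        = f' (0, 1) • ((1 : ℝ), (0 : ℝ)) + (-f' (1, 0)) • ((0 : ℝ), (1 : ℝ)) := by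
      simp [Prod.ext_iff]
    simp only [LinearMap.mem_ker, ContinuousLinearMap.coe_coe]
    rw [this, map_add, map_smul, map_smul]
    ring_nf
  have hkey := key ⟨_, hvker⟩
  rw [hRapp] at hkey
  simp only [neg_neg] at hkey
  -- hkey : f' (f' (1,0), f' (0,1)) = 0
  have hexp : f' ((f' ((1:ℝ),(0:ℝ)) : ℝ), (f' ((0:ℝ),(1:ℝ)) : ℝ))
      = f' (1, 0) * f' (1, 0) + f' (0, 1) * f' (0, 1) := by
    have : ((f' ((1:ℝ),(0:ℝ)) : ℝ), (f' ((0:ℝ),(1:ℝ)) : ℝ))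
        = f' (1, 0) • ((1 : ℝ), (0 : ℝ)) + f' (0, 1) • ((0 : ℝ), (1 : ℝ)) := by
      simp [Prod.ext_iff]
    rw [this, map_add, map_smul, map_smul]
    simp [smul_eq_mul]
  rw [hexp] at hkey
  have h10 : f' ((1 : ℝ), (0 : ℝ)) = 0 := by nlinarith [sq_nonneg (f' ((1:ℝ),(0:ℝ))), sq_nonneg (f' ((0:ℝ),(1:ℝ)))]
  have h01 : f' ((0 : ℝ), (1 : ℝ)) = 0 := by nlinarith [sq_nonneg (f' ((1:ℝ),(0:ℝ))), sq_nonneg (f' ((0:ℝ),(1:ℝ)))]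
  apply hne
  refine ContinuousLinearMap.ext fun w => ?_
  have : w = w.1 • ((1 : ℝ), (0 : ℝ)) + w.2 • ((0 : ℝ), (1 : ℝ)) := by
    simp [Prod.ext_iff]
  show f' w = 0
  rw [this, map_add, map_smul, map_smul, h10, h01]
  simp
end
end

section
/- Let f be a smooth function near 0 ∈ ℝ² with f(0,0) = 0 and ∇f(0,0) ≠ (0,0), and set Lf(x,y) = −y·∂f/∂x(x,y) + x·∂f/∂y(x,y) (the Lie derivative of f along the rotational field (−y, x)). Then for every smooth function F defined near 0 there exist a neighborhood V of 0 and smooth functions u, v on V such that F = F(0,0) + u·f + v·Lf on V. (Hence the germ f has codimension 1: the quotient of the smooth germs at 0 by the ideal generated by f and Lf is spanned by the class of the constant 1.) -/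
set_option synthInstance.maxHeartbeats 1000000
set_option maxHeartbeats 1000000
set_option maxRecDepth 8000

open MeasureTheory intervalIntegral Metric Set

lemma my_hasFDerivAt_param {F : Type} [NormedAddCommGroup F] [NormedSpace ℝ F]
    (H : (ℝ × ℝ) × ℝ → F) (hH : ContDiff ℝ (⊤ : ℕ∞) H) (p₀ : ℝ × ℝ) :
    HasFDerivAt (fun p => ∫ t in (0:ℝ)..1, H (p, t))
      (∫ t in (0:ℝ)..1, (fderiv ℝ H (p₀, t)).comp (ContinuousLinearMap.inl ℝ (ℝ × ℝ) ℝ)) p₀ := by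
  set H' : (ℝ × ℝ) × ℝ → (ℝ × ℝ) →L[ℝ] F :=
    fun q => (fderiv ℝ H q).comp (ContinuousLinearMap.inl ℝ (ℝ × ℝ) ℝ) with hH'def
  have hH'c : Continuous H' := by
    have : ContDiff ℝ (⊤ : ℕ∞) H' :=
      (hH.fderiv_right (by norm_cast)).clm_comp contDiff_const
    exact this.continuous
  have hK : IsCompact (closedBall p₀ 1 ×ˢ Icc (0:ℝ) 1) :=
    (isCompact_closedBall _ _).prod isCompact_Icc
  obtain ⟨C, hC⟩ := hK.exists_bound_of_continuousOn hH'c.continuousOn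
  have hdiff : ∀ (t : ℝ) (x : ℝ × ℝ), HasFDerivAt (fun x => H (x, t)) (H' (x, t)) x := by
    intro t x
    exact ((hH.differentiable (by norm_cast) (x, t)).hasFDerivAt).comp x (hasFDerivAt_prodMk_left x t)
  exact intervalIntegral.hasFDerivAt_integral_of_dominated_of_fderiv_le
    (F := fun x t => H (x, t)) (F' := fun x t => H' (x, t)) (bound := fun _ => C)
    (ball_mem_nhds p₀ one_pos)
    (Filter.Eventually.of_forall fun x =>
      (hH.continuous.comp (Continuous.prodMk_right x)).aestronglyMeasurable)
    ((hH.continuous.comp (Continuous.prodMk_right p₀)).intervalIntegrable 0 1)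
    ((hH'c.comp (Continuous.prodMk_right p₀)).aestronglyMeasurable)
    (Filter.Eventually.of_forall fun t ht x hx =>
      hC _ ⟨ball_subset_closedBall hx, Ioc_subset_Icc_self (by simpa using ht)⟩)
    intervalIntegrable_const
    (Filter.Eventually.of_forall fun t _ x _ => hdiff t x)

lemma my_contDiff_param (n : ℕ) :
    ∀ {F : Type} [NormedAddCommGroup F] [NormedSpace ℝ F] (H : (ℝ × ℝ) × ℝ → F),
      ContDiff ℝ (⊤ : ℕ∞) H → ContDiff ℝ (n : ℕ∞) (fun p => ∫ t in (0:ℝ)..1, H (p, t)) := by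
  induction n with
  | zero =>
    intro F _ _ H hH
    refine (contDiff_zero.2 ?_).of_le (by norm_num)
    exact continuous_iff_continuousAt.2 fun p =>
      (my_hasFDerivAt_param H hH p).differentiableAt.continuousAt
  | succ n ih =>
    intro F _ _ H hH
    have hd : Differentiable ℝ (fun p => ∫ t in (0:ℝ)..1, H (p, t)) :=
      fun p => (my_hasFDerivAt_param H hH p).differentiableAt
    have hfd : fderiv ℝ (fun p => ∫ t in (0:ℝ)..1, H (p, t)) = fun p =>
        ∫ t in (0:ℝ)..1, (fderiv ℝ H (p, t)).comp (ContinuousLinearMap.inl ℝ (ℝ × ℝ) ℝ) :=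
      funext fun p => (my_hasFDerivAt_param H hH p).fderiv
    have hH' : ContDiff ℝ (⊤ : ℕ∞)
        (fun q : (ℝ × ℝ) × ℝ => (fderiv ℝ H q).comp (ContinuousLinearMap.inl ℝ (ℝ × ℝ) ℝ)) :=
      (hH.fderiv_right (by norm_cast)).clm_comp contDiff_const
    have : ContDiff ℝ ((n : ℕ∞) + 1) (fun p => ∫ t in (0:ℝ)..1, H (p, t)) := by
      rw [show ((n : ℕ∞) : WithTop ℕ∞) + 1 = ((n : WithTop ℕ∞)) + 1 by norm_cast,
        contDiff_succ_iff_fderiv]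
      refine ⟨hd, by simp, ?_⟩
      rw [hfd]
      exact (ih _ hH').of_le (by norm_cast)
    exact this.of_le (by norm_cast)

lemma clm_eval (L : (ℝ × ℝ) →L[ℝ] ℝ) (p : ℝ × ℝ) :
    L p = p.1 * L (1, 0) + p.2 * L (0, 1) := by
  have : p = p.1 • ((1:ℝ), (0:ℝ)) + p.2 • ((0:ℝ), (1:ℝ)) := by
    simp [Prod.ext_iff]
  conv_lhs => rw [this, L.map_add, L.map_smul, L.map_smul]
  simp

lemma my_hadamard (G : ℝ × ℝ → ℝ) (hG : ContDiff ℝ (⊤ : ℕ∞) G) :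
    ∃ g₁ g₂ : ℝ × ℝ → ℝ, ContDiff ℝ (⊤ : ℕ∞) g₁ ∧ ContDiff ℝ (⊤ : ℕ∞) g₂ ∧
      g₁ 0 = fderiv ℝ G 0 (1, 0) ∧ g₂ 0 = fderiv ℝ G 0 (0, 1) ∧
      ∀ p : ℝ × ℝ, G p = G 0 + p.1 * g₁ p + p.2 * g₂ p := by
  have hfd : ContDiff ℝ (⊤ : ℕ∞) (fun p : ℝ × ℝ => fderiv ℝ G p) := hG.fderiv_right (by norm_cast)
  have hsm : ContDiff ℝ (⊤ : ℕ∞) (fun q : (ℝ × ℝ) × ℝ => q.2 • q.1) :=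
    contDiff_snd.smul contDiff_fst
  have key : ∀ w : ℝ × ℝ, ContDiff ℝ (⊤ : ℕ∞)
      (fun p : ℝ × ℝ => ∫ t in (0:ℝ)..1, fderiv ℝ G (t • p) w) := by
    intro w
    have hH : ContDiff ℝ (⊤ : ℕ∞) (fun q : (ℝ × ℝ) × ℝ => fderiv ℝ G (q.2 • q.1) w) :=
      (hfd.comp hsm).clm_apply contDiff_const
    rw [contDiff_infty]
    intro n
    exact my_contDiff_param n _ hH
  refine ⟨fun p => ∫ t in (0:ℝ)..1, fderiv ℝ G (t • p) (1, 0),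
      fun p => ∫ t in (0:ℝ)..1, fderiv ℝ G (t • p) (0, 1), key _, key _, ?_, ?_, ?_⟩
  · simp
  · simp
  intro p
  have hderiv : ∀ t : ℝ, HasDerivAt (fun t : ℝ => G (t • p)) (fderiv ℝ G (t • p) p) t := by
    intro t
    have h1 : HasDerivAt (fun t : ℝ => t • p) p t := by
      simpa using (hasDerivAt_id t).smul_const p
    exact ((hG.differentiable (by norm_cast) (t • p)).hasFDerivAt).comp_hasDerivAt t h1
  have hcont : ∀ w : ℝ × ℝ, Continuous (fun t : ℝ => fderiv ℝ G (t • p) w) := by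
    intro w
    exact (hfd.continuous.comp ((continuous_id.smul continuous_const))).clm_apply continuous_const
  have hint : (∫ t in (0:ℝ)..1, fderiv ℝ G (t • p) p) = G p - G 0 := by
    rw [intervalIntegral.integral_eq_sub_of_hasDerivAt (fun t _ => hderiv t)
      ((hcont p).intervalIntegrable 0 1)]
    simp
  have hsplit : (∫ t in (0:ℝ)..1, fderiv ℝ G (t • p) p)
      = p.1 * (∫ t in (0:ℝ)..1, fderiv ℝ G (t • p) (1, 0))
        + p.2 * (∫ t in (0:ℝ)..1, fderiv ℝ G (t • p) (0, 1)) := by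
    have i1 : IntervalIntegrable (fun t => p.1 * fderiv ℝ G (t • p) (1, 0)) volume 0 1 :=
      (continuous_const.mul (hcont _)).intervalIntegrable 0 1
    have i2 : IntervalIntegrable (fun t => p.2 * fderiv ℝ G (t • p) (0, 1)) volume 0 1 :=
      (continuous_const.mul (hcont _)).intervalIntegrable 0 1
    rw [← intervalIntegral.integral_const_mul, ← intervalIntegral.integral_const_mul,
      ← intervalIntegral.integral_add i1 i2]
    apply intervalIntegral.integral_congr
    intro t _
    exact clm_eval _ p
  rw [hsplit] at hint
  linarith

noncomputable section

/-- Let `f` be smooth near `0 ∈ ℝ²` with `f(0,0) = 0` and `∇f(0,0) ≠ 0`, and let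
`Lf(x,y) = −y·∂f/∂x + x·∂f/∂y` be its Lie derivative along the rotational field
`(−y, x)`. Then every smooth germ `F` at `0` can be written as
`F = F(0,0) + u·f + v·Lf` with smooth `u, v` near `0`: the germ `f` has
codimension 1 with respect to the ideal generated by `f` and `Lf`. -/
theorem stmt_15 (U : Set (ℝ × ℝ)) (hUo : IsOpen U) (hU0 : (0 : ℝ × ℝ) ∈ U)
    (f : ℝ × ℝ → ℝ) (hf : ContDiffOn ℝ (⊤ : ℕ∞) f U)
    (hf0 : f 0 = 0) (hdf : fderiv ℝ f 0 ≠ 0)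
    (F : ℝ × ℝ → ℝ) (UF : Set (ℝ × ℝ)) (hUFo : IsOpen UF) (hUF0 : (0 : ℝ × ℝ) ∈ UF)
    (hF : ContDiffOn ℝ (⊤ : ℕ∞) F UF) :
    ∃ V : Set (ℝ × ℝ), IsOpen V ∧ (0 : ℝ × ℝ) ∈ V ∧
      ∃ u v : ℝ × ℝ → ℝ, ContDiffOn ℝ (⊤ : ℕ∞) u V ∧ ContDiffOn ℝ (⊤ : ℕ∞) v V ∧
        ∀ p ∈ V, F p = F 0 + u p * f p + v p * fderiv ℝ f p (-p.2, p.1) := by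
  have hWo : IsOpen (U ∩ UF) := hUo.inter hUFo
  obtain ⟨r, hr, hrW⟩ := Metric.isOpen_iff.1 hWo 0 ⟨hU0, hUF0⟩
  set χ : ContDiffBump (0 : ℝ × ℝ) := ⟨r/2, 2*r/3, by linarith, by linarith⟩ with hχdef
  -- multiplication by the bump extends smooth functions on U ∩ UF to global smooth functions
  have ext : ∀ g : ℝ × ℝ → ℝ, ContDiffOn ℝ (⊤ : ℕ∞) g (U ∩ UF) →
      ContDiff ℝ (⊤ : ℕ∞) (fun p => χ p * g p) := by
    intro g hg
    rw [contDiff_iff_contDiffAt]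
    intro p
    by_cases hp : p ∈ U ∩ UF
    · exact χ.contDiff.contDiffAt.mul (hg.contDiffAt (hWo.mem_nhds hp))
    · have hp' : p ∈ (tsupport χ)ᶜ := by
        intro hmem
        rw [χ.tsupport_eq] at hmem
        exact hp (hrW (lt_of_le_of_lt (mem_closedBall.1 hmem) (by simpa [hχdef] using by linarith)))
      refine (contDiffAt_const (c := (0:ℝ))).congr_of_eventuallyEq ?_
      filter_upwards [(isOpen_compl_iff.2 (isClosed_tsupport χ)).mem_nhds hp'] with q hq
      simp [image_eq_zero_of_notMem_tsupport hq]
  have hχ1 : ∀ p ∈ ball (0 : ℝ × ℝ) (r/2), χ p = 1 := fun p hp =>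
    χ.one_of_mem_closedBall (ball_subset_closedBall hp)
  set φ : ℝ × ℝ → ℝ := fun p => χ p * f p with hφdef
  set Ft : ℝ × ℝ → ℝ := fun p => χ p * F p with hFtdef
  have hφsm : ContDiff ℝ (⊤ : ℕ∞) φ := ext f (hf.mono inter_subset_left)
  have hFtsm : ContDiff ℝ (⊤ : ℕ∞) Ft := ext F (hF.mono inter_subset_right)
  have h0b : (0 : ℝ × ℝ) ∈ ball (0 : ℝ × ℝ) (r/2) := mem_ball_self (by linarith)
  have hφf : ∀ p ∈ ball (0 : ℝ × ℝ) (r/2), φ p = f p := fun p hp => by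
    simp [hφdef, hχ1 p hp]
  have hFtF : ∀ p ∈ ball (0 : ℝ × ℝ) (r/2), Ft p = F p := fun p hp => by
    simp [hFtdef, hχ1 p hp]
  have hfderiv : ∀ p ∈ ball (0 : ℝ × ℝ) (r/2), fderiv ℝ φ p = fderiv ℝ f p := by
    intro p hp
    apply Filter.EventuallyEq.fderiv_eq
    filter_upwards [isOpen_ball.mem_nhds hp] with q hq
    exact hφf q hq
  set Lφ : ℝ × ℝ → ℝ := fun p => fderiv ℝ φ p (-p.2, p.1) with hLφdef
  have hLφsm : ContDiff ℝ (⊤ : ℕ∞) Lφ :=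
    (hφsm.fderiv_right (by norm_cast)).clm_apply (contDiff_snd.neg.prodMk contDiff_fst)
  obtain ⟨A, B, hA, hB, hA0, hB0, hφeq⟩ := my_hadamard φ hφsm
  obtain ⟨C, D, hC, hD, hC0, hD0, hLφeq⟩ := my_hadamard Lφ hLφsm
  obtain ⟨P, Q, hP, hQ, _, _, hFteq⟩ := my_hadamard Ft hFtsm
  set a : ℝ := fderiv ℝ f 0 (1, 0) with hadef
  set b : ℝ := fderiv ℝ f 0 (0, 1) with hbdef
  have hφf0 : fderiv ℝ φ 0 = fderiv ℝ f 0 := hfderiv 0 h0b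
  -- second derivative of Lφ at 0
  have hJ : HasFDerivAt (fun p : ℝ × ℝ => (-p.2, p.1))
      (((-(ContinuousLinearMap.snd ℝ ℝ ℝ)).prod (ContinuousLinearMap.fst ℝ ℝ ℝ))) 0 :=
    ((-(ContinuousLinearMap.snd ℝ ℝ ℝ)).prod (ContinuousLinearMap.fst ℝ ℝ ℝ)).hasFDerivAt
  have hc : HasFDerivAt (fun p => fderiv ℝ φ p) (fderiv ℝ (fun p => fderiv ℝ φ p) 0) 0 :=
    (((hφsm.fderiv_right (m := (⊤ : ℕ∞)) (by norm_cast)).differentiable (by norm_cast)) 0).hasFDerivAt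
  have hLφd := hc.clm_apply hJ
  have hLφfderiv := hLφd.fderiv
  have hC0' : C 0 = b := by
    have hz : ((-(0:ℝ×ℝ).2, (0:ℝ×ℝ).1) : ℝ × ℝ) = 0 := by norm_num [Prod.ext_iff]
    have hJ1 : ((-(ContinuousLinearMap.snd ℝ ℝ ℝ)).prod (ContinuousLinearMap.fst ℝ ℝ ℝ))
        ((1:ℝ), (0:ℝ)) = ((0:ℝ), (1:ℝ)) := by
      simp [ContinuousLinearMap.prod_apply]
    rw [hC0, hLφfderiv, hz, map_zero, ContinuousLinearMap.add_apply,
      ContinuousLinearMap.zero_apply, add_zero, ContinuousLinearMap.comp_apply, hJ1, hφf0]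
  have hD0' : D 0 = -a := by
    have hz : ((-(0:ℝ×ℝ).2, (0:ℝ×ℝ).1) : ℝ × ℝ) = 0 := by norm_num [Prod.ext_iff]
    have hJ1 : ((-(ContinuousLinearMap.snd ℝ ℝ ℝ)).prod (ContinuousLinearMap.fst ℝ ℝ ℝ))
        ((0:ℝ), (1:ℝ)) = (-((1:ℝ), (0:ℝ)) : ℝ × ℝ) := by
      simp [ContinuousLinearMap.prod_apply, Prod.ext_iff]
    rw [hD0, hLφfderiv, hz, map_zero, ContinuousLinearMap.add_apply,
      ContinuousLinearMap.zero_apply, add_zero, ContinuousLinearMap.comp_apply, hJ1, map_neg,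
      hφf0]
  have hA0' : A 0 = a := by rw [hA0, hφf0]
  have hB0' : B 0 = b := by rw [hB0, hφf0]
  set det : ℝ × ℝ → ℝ := fun p => A p * D p - B p * C p with hdetdef
  have hdetsm : ContDiff ℝ (⊤ : ℕ∞) det := (hA.mul hD).sub (hB.mul hC)
  have hab : a ≠ 0 ∨ b ≠ 0 := by
    by_contra h
    push_neg at h
    apply hdf
    refine ContinuousLinearMap.ext fun p => ?_
    rw [clm_eval (fderiv ℝ f 0) p, ← hadef, ← hbdef, h.1, h.2]
    simp
  have hdet0 : det 0 ≠ 0 := by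
    simp only [hdetdef, hA0', hB0', hC0', hD0']
    have hpos : 0 < a^2 + b^2 := by
      rcases hab with h | h
      · exact add_pos_of_pos_of_nonneg (by positivity) (sq_nonneg b)
      · exact add_pos_of_nonneg_of_pos (sq_nonneg a) (by positivity)
    intro heq
    nlinarith
  refine ⟨ball (0 : ℝ × ℝ) (r/2) ∩ {p | det p ≠ 0},
    isOpen_ball.inter (isOpen_ne.preimage hdetsm.continuous),
    ⟨h0b, hdet0⟩,
    fun p => (P p * D p - Q p * C p) / det p,
    fun p => (Q p * A p - P p * B p) / det p, ?_, ?_, ?_⟩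
  · exact ContDiffOn.div (((hP.mul hD).sub (hQ.mul hC)).contDiffOn) (hdetsm.contDiffOn)
      (fun p hp => hp.2)
  · exact ContDiffOn.div (((hQ.mul hA).sub (hP.mul hB)).contDiffOn) (hdetsm.contDiffOn)
      (fun p hp => hp.2)
  · intro p hp
    have hdp : det p ≠ 0 := hp.2
    have hpb : p ∈ ball (0 : ℝ × ℝ) (r/2) := hp.1
    have e1 : f p = p.1 * A p + p.2 * B p := by
      rw [← hφf p hpb, hφeq p]
      simp [hφdef, hχ1 0 h0b, hf0]
    have eL : fderiv ℝ f p (-p.2, p.1) = p.1 * C p + p.2 * D p := by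
      rw [← hfderiv p hpb]
      have : Lφ 0 = 0 := by
        simp only [hLφdef]
        have : ((-(0:ℝ×ℝ).2, (0:ℝ×ℝ).1) : ℝ × ℝ) = 0 := by simp [Prod.ext_iff]
        rw [this, (fderiv ℝ φ 0).map_zero]
      have h2 := hLφeq p
      rw [this] at h2
      simpa [hLφdef] using h2
    have e3 : F p = F 0 + p.1 * P p + p.2 * Q p := by
      rw [← hFtF p hpb, hFteq p, hFtF 0 h0b]
    rw [e3, e1, eL, hdetdef] at *
    field_simp [show D p * A p - C p * B p ≠ 0 from fun h => hdp (by show A p * D p - B p * C p = 0; linarith)]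
    ring
end
end
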